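/- arXiv:0704.1431 — 8 statements merged into one kernel-verified Lean document; each statement's English description precedes it below -/
import Mathlib

section
/- Let G be a finite simple graph and let F be a finite simple graph on vertex set V(F) that is a Schreier graph with connecting set S: S is a set of permutations of V(F) with S = S⁻¹ and A(F) = Σ_{s∈S} P(s). Let φ be a voltage assignment on G with values in Aut(F), and let Γ be a subgroup of the symmetric group on V(F) containing all values of φ and all elements of S. Let ρ₁, …, ρ_ℓ be group homomorphisms from Γ to the invertible complex f_i×f_i matrices, let m₁, …, m_ℓ be nonnegative integers with Σᵢ mᵢfᵢ = |V(F)|, and suppose M is an invertible complex V(F)×V(F) matrix such that for every γ ∈ Γ, M⁻¹P(γ)M = ⊕_{i=1}^{ℓ} (I_{mᵢ} ⊗ ρᵢ(γ)). Then for every complex number μ, (M ⊗ I_{V(G)})⁻¹ (A(G×^φF) − μ·D(G×^φF)) (M ⊗ I_{V(G)}) = ⊕_{i=1}^{ℓ} I_{mᵢ} ⊗ ( Σ_{γ∈Γ} ρᵢ(γ) ⊗ A(G_{φ,γ}) − μ·I_{fᵢ} ⊗ (D(G) + |S|·I_{V(G)}) + (Σ_{s∈S} ρᵢ(s)) ⊗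 I_{V(G)} ), where vertices of G×^φF are indexed by pairs (v,u) with v ∈ V(F), u ∈ V(G). -/
open Matrix BigOperators Kronecker
open scoped Classical

noncomputable section

variable {α β : Type*}

def adjM [Fintype α] (G : SimpleGraph α) : Matrix α α ℂ :=
  Matrix.of fun u v => if G.Adj u v then (1 : ℂ) else 0

def degM [Fintype α] (G : SimpleGraph α) : Matrix α α ℂ :=
  Matrix.diagonal fun v => ((G.neighborSet v).ncard : ℂ)

def Fpoly [Fintype α] (G : SimpleGraph α) (lam mu : ℂ) : ℂ :=
  (lam • (1 : Matrix α α ℂ) - (adjM G - mu • degM G)).det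

def permM (γ : Equiv.Perm β) : Matrix β β ℂ :=
  Matrix.of fun v w => if γ v = w then (1 : ℂ) else 0

def voltM [Fintype α] (G : SimpleGraph α) (φ : α → α → Equiv.Perm β) (γ : Equiv.Perm β) :
    Matrix α α ℂ :=
  Matrix.of fun u₁ u₂ => if G.Adj u₁ u₂ ∧ φ u₁ u₂ = γ then (1 : ℂ) else 0

def autPerm (F : SimpleGraph β) : Subgroup (Equiv.Perm β) where
  carrier := {γ | ∀ a b, F.Adj (γ a) (γ b) ↔ F.Adj a b}
  one_mem' := by intro a b; simp
  mul_mem' := by intro γ δ hγ hδ a b; simp [Equiv.Perm.mul_apply, hγ _ _, hδ _ _]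
  inv_mem' := by intro γ hγ a b; simpa using (hγ (γ⁻¹ a) (γ⁻¹ b)).symm

def bundle (G : SimpleGraph α) (F : SimpleGraph β) (φ : α → α → Equiv.Perm β)
    (hsym : ∀ u₁ u₂, G.Adj u₁ u₂ → φ u₂ u₁ = (φ u₁ u₂)⁻¹) : SimpleGraph (β × α) where
  Adj p q := (G.Adj p.2 q.2 ∧ q.1 = φ p.2 q.2 p.1) ∨ (p.2 = q.2 ∧ F.Adj p.1 q.1)
  symm := by
    constructor
    rintro ⟨v₁, u₁⟩ ⟨v₂, u₂⟩ hadj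
    dsimp only at hadj ⊢
    rcases hadj with ⟨h, rfl⟩ | ⟨rfl, h⟩
    · left
      refine ⟨h.symm, ?_⟩
      rw [hsym _ _ h]
      simp
    · right
      exact ⟨rfl, h.symm⟩
  loopless := by
    constructor
    rintro ⟨v, u⟩ hadj
    dsimp only at hadj
    rcases hadj with ⟨h, _⟩ | ⟨_, h⟩
    · exact G.irrefl h
    · exact F.irrefl h

def dsum [Fintype α] (B : β → Matrix α α ℂ) : Matrix (β × α) (β × α) ℂ :=
  Matrix.of fun p q => if p.1 = q.1 then B p.1 p.2 q.2 else 0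

def bigE {ℓ : ℕ} {f m : Fin ℓ → ℕ} (e : β ≃ Σ i : Fin ℓ, Fin (m i) × Fin (f i)) (α : Type*) :
    β × α ≃ Σ i : Fin ℓ, Fin (m i) × (Fin (f i) × α) :=
  (e.prodCongr (Equiv.refl α)).trans
    ((Equiv.sigmaProdDistrib _ _).trans (Equiv.sigmaCongrRight fun _ => Equiv.prodAssoc _ _ _))


section MyHelpers

lemma my_deg_sum {γ : Type*} [Fintype γ] (H : SimpleGraph γ) (x : γ) :
    ((H.neighborSet x).ncard : ℂ) = ∑ y, adjM H x y := by
  classical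
  have h1 : (H.neighborSet x).ncard = (Finset.univ.filter fun y => H.Adj x y).card := by
    rw [Set.ncard_eq_toFinset_card']
    congr 1
    ext y
    simp
  rw [h1, Finset.card_filter]
  push_cast
  exact Finset.sum_congr rfl fun y _ => by simp [adjM]

lemma my_sumGamma [Fintype α] [Fintype β] (G : SimpleGraph α) (φ : α → α → Equiv.Perm β)
    (Γ : Subgroup (Equiv.Perm β)) (hφΓ : ∀ u₁ u₂, G.Adj u₁ u₂ → φ u₁ u₂ ∈ Γ)
    (g : Equiv.Perm β → ℂ) (u₁ u₂ : α) :
    (∑ γ : Γ, if G.Adj u₁ u₂ ∧ φ u₁ u₂ = (γ : Equiv.Perm β) then g (γ : Equiv.Perm β) else 0)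
      = if G.Adj u₁ u₂ then g (φ u₁ u₂) else 0 := by
  by_cases h : G.Adj u₁ u₂
  · rw [if_pos h, Finset.sum_eq_single (⟨φ u₁ u₂, hφΓ _ _ h⟩ : Γ)]
    · simp [h]
    · intro γ _ hne
      rw [if_neg]
      rintro ⟨-, hγ⟩
      exact hne (Subtype.ext hγ.symm)
    · intro h'
      exact absurd (Finset.mem_univ _) h'
  · simp [h]

lemma my_adj_decomp [Fintype α] [Fintype β] (G : SimpleGraph α) (F : SimpleGraph β)
    (φ : α → α → Equiv.Perm β) (hsym : ∀ u₁ u₂, G.Adj u₁ u₂ → φ u₂ u₁ = (φ u₁ u₂)⁻¹)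
    (Γ : Subgroup (Equiv.Perm β))
    (hφΓ : ∀ u₁ u₂, G.Adj u₁ u₂ → φ u₁ u₂ ∈ Γ) :
    adjM (bundle G F φ hsym) =
      (∑ γ : Γ, permM (γ : Equiv.Perm β) ⊗ₖ voltM G φ (γ : Equiv.Perm β))
        + adjM F ⊗ₖ (1 : Matrix α α ℂ) := by
  ext ⟨v₁, u₁⟩ ⟨v₂, u₂⟩
  have hb : (bundle G F φ hsym).Adj (v₁, u₁) (v₂, u₂) ↔
      (G.Adj u₁ u₂ ∧ v₂ = φ u₁ u₂ v₁) ∨ (u₁ = u₂ ∧ F.Adj v₁ v₂) := Iff.rfl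
  simp only [adjM, Matrix.of_apply, Matrix.add_apply, Matrix.sum_apply,
    Matrix.kroneckerMap_apply, permM, voltM, hb, Matrix.one_apply,
    mul_ite, mul_one, mul_zero]
  rw [my_sumGamma G φ Γ hφΓ (fun γ' => if γ' v₁ = v₂ then (1 : ℂ) else 0) u₁ u₂]
  by_cases h1 : G.Adj u₁ u₂
  · have h2 : u₁ ≠ u₂ := G.ne_of_adj h1
    simp [h1, h2, eq_comm]
  · by_cases h2 : u₁ = u₂ <;> by_cases h3 : F.Adj v₁ v₂ <;> simp [h1, h2, h3]

lemma my_deg_decomp [Fintype α] [Fintype β] (G : SimpleGraph α) (F : SimpleGraph β)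
    (φ : α → α → Equiv.Perm β) (hsym : ∀ u₁ u₂, G.Adj u₁ u₂ → φ u₂ u₁ = (φ u₁ u₂)⁻¹)
    (Γ : Subgroup (Equiv.Perm β))
    (hφΓ : ∀ u₁ u₂, G.Adj u₁ u₂ → φ u₁ u₂ ∈ Γ)
    (S : Finset (Equiv.Perm β)) (hSchreier : adjM F = ∑ s ∈ S, permM s) :
    degM (bundle G F φ hsym) =
      (1 : Matrix β β ℂ) ⊗ₖ (degM G + (S.card : ℂ) • (1 : Matrix α α ℂ)) := by
  have hF : ∀ v, (∑ w, adjM F v w) = (S.card : ℂ) := by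
    intro v
    rw [hSchreier]
    simp only [Matrix.sum_apply, permM, Matrix.of_apply]
    rw [Finset.sum_comm]
    simp
  have hdeg : ∀ v u, (((bundle G F φ hsym).neighborSet (v, u)).ncard : ℂ)
      = ((G.neighborSet u).ncard : ℂ) + (S.card : ℂ) := by
    intro v u
    rw [my_deg_sum, my_adj_decomp G F φ hsym Γ hφΓ]
    simp only [Matrix.add_apply, Matrix.sum_apply, Matrix.kroneckerMap_apply,
      Finset.sum_add_distrib]
    congr 1
    · -- first part sums to deg_G u
      rw [my_deg_sum]
      rw [Fintype.sum_prod_type]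
      have hterm : ∀ v₂ u₂, (∑ γ : Γ,
          permM (γ : Equiv.Perm β) v v₂ * voltM G φ (γ : Equiv.Perm β) u u₂)
          = if G.Adj u u₂ then (if φ u u₂ v = v₂ then (1 : ℂ) else 0) else 0 := by
        intro v₂ u₂
        simp only [permM, voltM, Matrix.of_apply, mul_ite, mul_one, mul_zero]
        exact my_sumGamma G φ Γ hφΓ (fun γ' => if γ' v = v₂ then (1 : ℂ) else 0) u u₂
      calc (∑ v₂, ∑ u₂, ∑ γ : Γ,
            permM (γ : Equiv.Perm β) v v₂ * voltM G φ (γ : Equiv.Perm β) u u₂)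
          = ∑ v₂, ∑ u₂, if G.Adj u u₂ then (if φ u u₂ v = v₂ then (1 : ℂ) else 0) else 0 := by
            exact Finset.sum_congr rfl fun v₂ _ => Finset.sum_congr rfl fun u₂ _ => hterm v₂ u₂
        _ = ∑ u₂, ∑ v₂, if G.Adj u u₂ then (if φ u u₂ v = v₂ then (1 : ℂ) else 0) else 0 :=
            Finset.sum_comm
        _ = ∑ u₂, adjM G u u₂ := by
            refine Finset.sum_congr rfl fun u₂ _ => ?_
            by_cases h : G.Adj u u₂ <;> simp [h, adjM]
    · -- second part sums to S.card
      rw [← hF v]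
      rw [Fintype.sum_prod_type]
      refine Finset.sum_congr rfl fun v₂ _ => ?_
      simp [Matrix.one_apply]
  ext ⟨v₁, u₁⟩ ⟨v₂, u₂⟩
  by_cases h1 : v₁ = v₂
  · subst h1
    by_cases h2 : u₁ = u₂
    · subst h2
      simp [degM, Matrix.one_apply, Matrix.diagonal_apply_eq, hdeg]
    · have : ((v₁, u₁) : β × α) ≠ (v₁, u₂) := by simp [h2]
      simp [degM, Matrix.diagonal_apply_ne _ this, Matrix.diagonal_apply_ne _ h2,
        Matrix.one_apply, h2]
  · have : ((v₁, u₁) : β × α) ≠ (v₂, u₂) := by simp [h1]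
    simp [degM, Matrix.diagonal_apply_ne _ this, Matrix.one_apply, h1]

lemma my_kron_sum_right {κ κ' ν ν' : Type*} {ι : Type*} (t : Finset ι)
    (A : Matrix κ κ' ℂ) (B : ι → Matrix ν ν' ℂ) :
    A ⊗ₖ (∑ x ∈ t, B x) = ∑ x ∈ t, A ⊗ₖ B x := by
  ext ⟨i, j⟩ ⟨k, l⟩
  simp [Matrix.sum_apply, Finset.mul_sum]

lemma my_sum_kron_left {κ κ' ν ν' : Type*} {ι : Type*} (t : Finset ι)
    (A : ι → Matrix κ κ' ℂ) (B : Matrix ν ν' ℂ) :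
    (∑ x ∈ t, A x) ⊗ₖ B = ∑ x ∈ t, A x ⊗ₖ B := by
  ext ⟨i, j⟩ ⟨k, l⟩
  simp [Matrix.sum_apply, Finset.sum_mul]

lemma my_bD_sum {ℓ : ℕ} {n' : Fin ℓ → Type*} {ι : Type*} (t : Finset ι)
    (g : ∀ i : Fin ℓ, ι → Matrix (n' i) (n' i) ℂ) :
    Matrix.blockDiagonal' (fun i => ∑ x ∈ t, g i x)
      = ∑ x ∈ t, Matrix.blockDiagonal' (fun i => g i x) := by
  ext ik jk
  rw [Matrix.sum_apply]
  simp only [Matrix.blockDiagonal'_apply]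
  split <;> simp [Matrix.sum_apply]

lemma my_bD_comb {ℓ : ℕ} {n' : Fin ℓ → Type*}
    (f g h : ∀ i : Fin ℓ, Matrix (n' i) (n' i) ℂ) (μ : ℂ) :
    Matrix.blockDiagonal' (fun i => f i - μ • g i + h i)
      = Matrix.blockDiagonal' f - μ • Matrix.blockDiagonal' g + Matrix.blockDiagonal' h := by
  ext ik jk
  simp only [Matrix.blockDiagonal'_apply, Matrix.sub_apply, Matrix.add_apply, Matrix.smul_apply,
    smul_eq_mul]
  split <;> simp

lemma my_reindex_sum {κ κ' κ'' κ''' : Type*} {ι : Type*} (t : Finset ι)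
    (a : κ ≃ κ') (b : κ'' ≃ κ''') (g : ι → Matrix κ κ'' ℂ) :
    Matrix.reindex a b (∑ x ∈ t, g x) = ∑ x ∈ t, Matrix.reindex a b (g x) := by
  ext i j
  simp [Matrix.sum_apply]

lemma my_reindex_comb {κ κ' κ'' κ''' : Type*} (a : κ ≃ κ') (b : κ'' ≃ κ''')
    (X Y W : Matrix κ κ'' ℂ) (μ : ℂ) :
    Matrix.reindex a b (X - μ • Y + W)
      = Matrix.reindex a b X - μ • Matrix.reindex a b Y + Matrix.reindex a b W := by
  ext i j
  simp

lemma my_bigE_apply {ℓ : ℕ} {f m : Fin ℓ → ℕ} (e : β ≃ Σ i : Fin ℓ, Fin (m i) × Fin (f i))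
    (v : β) (u : α) :
    bigE e α (v, u) = ⟨(e v).1, ((e v).2.1, ((e v).2.2, u))⟩ := rfl

lemma my_keyL [Fintype α] [Fintype β] {ℓ : ℕ} {f m : Fin ℓ → ℕ}
    (e : β ≃ Σ i : Fin ℓ, Fin (m i) × Fin (f i))
    (C : ∀ i, Matrix (Fin (f i)) (Fin (f i)) ℂ) (Y : Matrix α α ℂ) :
    Matrix.reindex (bigE e α).symm (bigE e α).symm
        (Matrix.blockDiagonal' fun i =>
          (1 : Matrix (Fin (m i)) (Fin (m i)) ℂ) ⊗ₖ (C i ⊗ₖ Y))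
      = (Matrix.reindex e.symm e.symm
          (Matrix.blockDiagonal' fun i =>
            (1 : Matrix (Fin (m i)) (Fin (m i)) ℂ) ⊗ₖ C i)) ⊗ₖ Y := by
  ext ⟨v₁, u₁⟩ ⟨v₂, u₂⟩
  simp only [Matrix.reindex_apply, Matrix.submatrix_apply, Equiv.symm_symm,
    Matrix.kroneckerMap_apply, my_bigE_apply]
  obtain ⟨i₁, a₁, b₁⟩ := e v₁
  obtain ⟨i₂, a₂, b₂⟩ := e v₂
  by_cases h : i₁ = i₂
  · subst h
    rw [Matrix.blockDiagonal'_apply_eq, Matrix.blockDiagonal'_apply_eq]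
    simp only [Matrix.kroneckerMap_apply, Matrix.one_apply]
    ring
  · rw [Matrix.blockDiagonal'_apply_ne _ _ _ h, Matrix.blockDiagonal'_apply_ne _ _ _ h,
      zero_mul]

lemma my_keyOne [Fintype β] {ℓ : ℕ} {f m : Fin ℓ → ℕ}
    (e : β ≃ Σ i : Fin ℓ, Fin (m i) × Fin (f i)) :
    Matrix.reindex e.symm e.symm
        (Matrix.blockDiagonal' fun i =>
          (1 : Matrix (Fin (m i)) (Fin (m i)) ℂ) ⊗ₖ (1 : Matrix (Fin (f i)) (Fin (f i)) ℂ))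
      = (1 : Matrix β β ℂ) := by
  have h1 : (fun i => (1 : Matrix (Fin (m i)) (Fin (m i)) ℂ)
      ⊗ₖ (1 : Matrix (Fin (f i)) (Fin (f i)) ℂ))
      = (1 : ∀ i : Fin ℓ, Matrix (Fin (m i) × Fin (f i)) (Fin (m i) × Fin (f i)) ℂ) :=
    funext fun i => Matrix.one_kronecker_one
  rw [h1, Matrix.blockDiagonal'_one, Matrix.reindex_apply, Matrix.submatrix_one_equiv]

end MyHelpers

theorem bundle_matrix_similarity_schreier
    {α β : Type*} [Fintype α] [Fintype β]
    (G : SimpleGraph α) (F : SimpleGraph β)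
    (S : Finset (Equiv.Perm β)) (hSinv : ∀ s ∈ S, s⁻¹ ∈ S)
    (hSchreier : adjM F = ∑ s ∈ S, permM s)
    (φ : α → α → Equiv.Perm β)
    (hsym : ∀ u₁ u₂, G.Adj u₁ u₂ → φ u₂ u₁ = (φ u₁ u₂)⁻¹)
    (hAut : ∀ u₁ u₂, G.Adj u₁ u₂ → φ u₁ u₂ ∈ autPerm F)
    (Γ : Subgroup (Equiv.Perm β))
    (hφΓ : ∀ u₁ u₂, G.Adj u₁ u₂ → φ u₁ u₂ ∈ Γ)
    (hSΓ : ∀ s ∈ S, s ∈ Γ)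
    (ℓ : ℕ) (f m : Fin ℓ → ℕ) (ρ : ∀ i : Fin ℓ, Γ →* GL (Fin (f i)) ℂ)
    (hsum : ∑ i, m i * f i = Fintype.card β)
    (e : β ≃ Σ i : Fin ℓ, Fin (m i) × Fin (f i))
    (M : Matrix β β ℂ) (hM : IsUnit M.det)
    (hP : ∀ γ : Γ, Matrix.reindex e e (M⁻¹ * permM (γ : Equiv.Perm β) * M)
        = Matrix.blockDiagonal' fun i =>
            (1 : Matrix (Fin (m i)) (Fin (m i)) ℂ)
              ⊗ₖ (ρ i γ : Matrix (Fin (f i)) (Fin (f i)) ℂ))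
    (μ : ℂ) :
    (M ⊗ₖ (1 : Matrix α α ℂ))⁻¹
        * (adjM (bundle G F φ hsym) - μ • degM (bundle G F φ hsym))
        * (M ⊗ₖ (1 : Matrix α α ℂ))
      = Matrix.reindex (bigE e α).symm (bigE e α).symm
          (Matrix.blockDiagonal' fun i =>
            (1 : Matrix (Fin (m i)) (Fin (m i)) ℂ) ⊗ₖ
              ((∑ γ : Γ, (ρ i γ : Matrix (Fin (f i)) (Fin (f i)) ℂ)
                  ⊗ₖ voltM G φ (γ : Equiv.Perm β))
                - μ • ((1 : Matrix (Fin (f i)) (Fin (f i)) ℂ)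
                    ⊗ₖ (degM G + (S.card : ℂ) • (1 : Matrix α α ℂ)))
                + (∑ s ∈ S.attach,
                    (ρ i ⟨(s : Equiv.Perm β), hSΓ s s.2⟩
                      : Matrix (Fin (f i)) (Fin (f i)) ℂ))
                  ⊗ₖ (1 : Matrix α α ℂ))) := by
  have hγM : ∀ γ : Γ, M⁻¹ * permM (γ : Equiv.Perm β) * M
      = Matrix.reindex e.symm e.symm (Matrix.blockDiagonal' fun i =>
          (1 : Matrix (Fin (m i)) (Fin (m i)) ℂ)
            ⊗ₖ (ρ i γ : Matrix (Fin (f i)) (Fin (f i)) ℂ)) := by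
    intro γ
    simpa using congrArg (⇑(Matrix.reindex e.symm e.symm)) (hP γ)
  have hconj : ∀ (X : Matrix β β ℂ) (Y : Matrix α α ℂ),
      (M⁻¹ ⊗ₖ (1 : Matrix α α ℂ)) * (X ⊗ₖ Y) * (M ⊗ₖ (1 : Matrix α α ℂ))
        = (M⁻¹ * X * M) ⊗ₖ Y := by
    intro X Y
    rw [← Matrix.mul_kronecker_mul, ← Matrix.mul_kronecker_mul, one_mul, mul_one]
  set Z : Matrix α α ℂ := degM G + (S.card : ℂ) • (1 : Matrix α α ℂ) with hZdef
  -- Left-hand side normal form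
  have hL : (M ⊗ₖ (1 : Matrix α α ℂ))⁻¹
        * (adjM (bundle G F φ hsym) - μ • degM (bundle G F φ hsym))
        * (M ⊗ₖ (1 : Matrix α α ℂ))
      = (∑ γ : Γ, (M⁻¹ * permM (γ : Equiv.Perm β) * M) ⊗ₖ voltM G φ (γ : Equiv.Perm β))
        + (∑ s ∈ S.attach, (M⁻¹ * permM (s : Equiv.Perm β) * M) ⊗ₖ (1 : Matrix α α ℂ))
        - μ • ((1 : Matrix β β ℂ) ⊗ₖ Z) := by
    rw [Matrix.inv_kronecker]
    rw [show (1 : Matrix α α ℂ)⁻¹ = 1 by simp]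
    rw [my_adj_decomp G F φ hsym Γ hφΓ, my_deg_decomp G F φ hsym Γ hφΓ S hSchreier, hSchreier]
    rw [my_sum_kron_left]
    rw [← Finset.sum_attach S (fun s => permM s ⊗ₖ (1 : Matrix α α ℂ))]
    rw [mul_sub, sub_mul, mul_add, add_mul]
    rw [mul_smul_comm, smul_mul_assoc]
    rw [Finset.mul_sum, Finset.sum_mul, Finset.mul_sum, Finset.sum_mul]
    rw [hconj (1 : Matrix β β ℂ) Z, Matrix.mul_one, Matrix.nonsing_inv_mul M hM]
    congr 1
    congr 1
    · exact Finset.sum_congr rfl fun γ _ => hconj _ _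
    · exact Finset.sum_congr rfl fun s _ => hconj _ _
  rw [hL]
  -- Right-hand side normal form
  have h1 : (fun i => (1 : Matrix (Fin (m i)) (Fin (m i)) ℂ) ⊗ₖ
        ((∑ γ : Γ, (ρ i γ : Matrix (Fin (f i)) (Fin (f i)) ℂ)
            ⊗ₖ voltM G φ (γ : Equiv.Perm β))
          - μ • ((1 : Matrix (Fin (f i)) (Fin (f i)) ℂ) ⊗ₖ Z)
          + (∑ s ∈ S.attach,
              (ρ i ⟨(s : Equiv.Perm β), hSΓ s s.2⟩ : Matrix (Fin (f i)) (Fin (f i)) ℂ))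
            ⊗ₖ (1 : Matrix α α ℂ)))
      = fun i => (∑ γ : Γ, (1 : Matrix (Fin (m i)) (Fin (m i)) ℂ)
            ⊗ₖ ((ρ i γ : Matrix (Fin (f i)) (Fin (f i)) ℂ) ⊗ₖ voltM G φ (γ : Equiv.Perm β)))
          - μ • ((1 : Matrix (Fin (m i)) (Fin (m i)) ℂ)
            ⊗ₖ ((1 : Matrix (Fin (f i)) (Fin (f i)) ℂ) ⊗ₖ Z))
          + (∑ s ∈ S.attach, (1 : Matrix (Fin (m i)) (Fin (m i)) ℂ)
            ⊗ₖ ((ρ i ⟨(s : Equiv.Perm β), hSΓ s s.2⟩ : Matrix (Fin (f i)) (Fin (f i)) ℂ)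
              ⊗ₖ (1 : Matrix α α ℂ))) := by
    funext i
    rw [my_sum_kron_left]
    rw [sub_eq_add_neg, ← neg_smul]
    rw [Matrix.kronecker_add, Matrix.kronecker_add, Matrix.kronecker_smul]
    rw [my_kron_sum_right, my_kron_sum_right]
    rw [neg_smul, ← sub_eq_add_neg]
  rw [h1]
  rw [my_bD_comb (fun i => ∑ γ : Γ, (1 : Matrix (Fin (m i)) (Fin (m i)) ℂ)
        ⊗ₖ ((ρ i γ : Matrix (Fin (f i)) (Fin (f i)) ℂ) ⊗ₖ voltM G φ (γ : Equiv.Perm β)))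
      (fun i => (1 : Matrix (Fin (m i)) (Fin (m i)) ℂ)
        ⊗ₖ ((1 : Matrix (Fin (f i)) (Fin (f i)) ℂ) ⊗ₖ Z))
      (fun i => ∑ s ∈ S.attach, (1 : Matrix (Fin (m i)) (Fin (m i)) ℂ)
        ⊗ₖ ((ρ i ⟨(s : Equiv.Perm β), hSΓ s s.2⟩ : Matrix (Fin (f i)) (Fin (f i)) ℂ)
          ⊗ₖ (1 : Matrix α α ℂ))) μ]
  rw [my_reindex_comb]
  rw [my_bD_sum, my_bD_sum, my_reindex_sum, my_reindex_sum]
  have h2 : ∀ γ : Γ, Matrix.reindex (bigE e α).symm (bigE e α).symm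
        (Matrix.blockDiagonal' fun i => (1 : Matrix (Fin (m i)) (Fin (m i)) ℂ)
          ⊗ₖ ((ρ i γ : Matrix (Fin (f i)) (Fin (f i)) ℂ) ⊗ₖ voltM G φ (γ : Equiv.Perm β)))
      = (M⁻¹ * permM (γ : Equiv.Perm β) * M) ⊗ₖ voltM G φ (γ : Equiv.Perm β) := by
    intro γ
    rw [my_keyL, ← hγM]
  have h3 : ∀ s : {x // x ∈ S}, Matrix.reindex (bigE e α).symm (bigE e α).symm
        (Matrix.blockDiagonal' fun i => (1 : Matrix (Fin (m i)) (Fin (m i)) ℂ)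
          ⊗ₖ ((ρ i ⟨(s : Equiv.Perm β), hSΓ s s.2⟩ : Matrix (Fin (f i)) (Fin (f i)) ℂ)
            ⊗ₖ (1 : Matrix α α ℂ)))
      = (M⁻¹ * permM (s : Equiv.Perm β) * M) ⊗ₖ (1 : Matrix α α ℂ) := by
    intro s
    rw [my_keyL, ← hγM ⟨(s : Equiv.Perm β), hSΓ s s.2⟩]
  have h4 : Matrix.reindex (bigE e α).symm (bigE e α).symm
        (Matrix.blockDiagonal' fun i => (1 : Matrix (Fin (m i)) (Fin (m i)) ℂ)
          ⊗ₖ ((1 : Matrix (Fin (f i)) (Fin (f i)) ℂ) ⊗ₖ Z))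
      = (1 : Matrix β β ℂ) ⊗ₖ Z := by
    rw [my_keyL, my_keyOne]
  rw [Finset.sum_congr rfl fun γ _ => h2 γ, Finset.sum_congr rfl fun s _ => h3 s, h4]
  abel


end
end

section
/- Let G be a finite simple graph and let φ assign to each ordered pair (u₁,u₂) of adjacent vertices of G a permutation φ(u₁,u₂) of {1,…,n} with φ(u₂,u₁) = φ(u₁,u₂)⁻¹. Let G^φ be the n-fold covering graph of G: its vertex set is V(G)×{1,…,n}, and (u₁,k) is adjacent to (u₂,l) iff u₁ and u₂ are adjacent in G and l = φ(u₁,u₂)(k). Let Γ be a subgroup of the symmetric group S_n containing all values of φ, let ρ₁ be the trivial one-dimensional representation of Γ and ρ₂, …, ρ_ℓ group homomorphisms from Γ to the invertible complex f_i×f_i matrices, let m₁ = 1 and m₂, …, m_ℓ be nonnegative integers with Σᵢ mᵢfᵢ = n, and suppose there is an invertible complex n×n matrix M such that for every γ ∈ Γ, M⁻¹P(γ)M = ⊕_{i=1}^{ℓ} (I_{mᵢ} ⊗ ρᵢ(γ)). Then for all complex λ, μ: F_{G^φ}(λ,μ) = F_G(λ,μ) · ∏_{i=2}^{ℓ} det[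 I_{fᵢ} ⊗ (λ·I_{V(G)} + μ·D(G)) − Σ_{γ∈Γ} ρᵢ(γ) ⊗ A(G_{φ,γ}) ]^{mᵢ}. -/
open Matrix BigOperators Kronecker
open scoped Classical

noncomputable section

variable {α β : Type*}

/-- determinant of a dependent block diagonal matrix -/
lemma det_blockDiagonal'_eq {ι : Type*} [Fintype ι] [LinearOrder ι] [DecidableEq ι] {σ : ι → Type*}
    [∀ i, Fintype (σ i)] [∀ i, DecidableEq (σ i)] (N : ∀ i, Matrix (σ i) (σ i) ℂ) :
    (Matrix.blockDiagonal' N).det = ∏ i, (N i).det := by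
  rw [(Matrix.blockTriangular_blockDiagonal' N).det_fintype]
  refine Finset.prod_congr rfl fun k _ => ?_
  let he : σ k ≃ {a : Σ i, σ i // a.1 = k} :=
    { toFun := fun x => ⟨⟨k, x⟩, rfl⟩
      invFun := fun a => cast (congrArg σ a.2) a.1.2
      left_inv := fun x => rfl
      right_inv := by rintro ⟨⟨i, x⟩, rfl⟩; rfl }
  have : (Matrix.blockDiagonal' N).toSquareBlock Sigma.fst k
      = Matrix.reindex he he (N k) := by
    ext ⟨⟨i, x⟩, hi⟩ ⟨⟨j, y⟩, hj⟩
    dsimp at hi hj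
    subst hi; subst hj
    simp [Matrix.toSquareBlock_def, Matrix.blockDiagonal'_apply_eq, he]
  rw [this, Matrix.det_reindex_self]

lemma kron_sub {l m p q : Type*} (A : Matrix l m ℂ) (B C : Matrix p q ℂ) :
    A ⊗ₖ (B - C) = A ⊗ₖ B - A ⊗ₖ C := by
  ext ⟨i, x⟩ ⟨j, y⟩
  simp [Matrix.kroneckerMap_apply, mul_sub]

lemma kron_sum {l m p q ι : Type*} (s : Finset ι) (A : Matrix l m ℂ) (B : ι → Matrix p q ℂ) :
    A ⊗ₖ (∑ γ ∈ s, B γ) = ∑ γ ∈ s, A ⊗ₖ B γ := by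
  ext ⟨i, x⟩ ⟨j, y⟩
  simp [Matrix.kroneckerMap_apply, Matrix.sum_apply, Finset.mul_sum]

lemma bigE_symm_apply {ℓ : ℕ} {f m : Fin ℓ → ℕ} (e : β ≃ Σ i : Fin ℓ, Fin (m i) × Fin (f i))
    {α : Type*} (i : Fin ℓ) (j : Fin (m i)) (s : Fin (f i)) (a : α) :
    (bigE e α).symm ⟨i, (j, (s, a))⟩ = (e.symm ⟨i, (j, s)⟩, a) := rfl

lemma reindex_kron_block {n ℓ : ℕ} {f m : Fin ℓ → ℕ} {α : Type*}
    (e : Fin n ≃ Σ i : Fin ℓ, Fin (m i) × Fin (f i))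
    (N : Matrix (Fin n) (Fin n) ℂ) (C : ∀ i, Matrix (Fin (f i)) (Fin (f i)) ℂ)
    (A : Matrix α α ℂ)
    (h : Matrix.reindex e e N = Matrix.blockDiagonal' fun i =>
        (1 : Matrix (Fin (m i)) (Fin (m i)) ℂ) ⊗ₖ C i) :
    Matrix.reindex (bigE e α) (bigE e α) (N ⊗ₖ A)
      = Matrix.blockDiagonal' fun i =>
          (1 : Matrix (Fin (m i)) (Fin (m i)) ℂ) ⊗ₖ (C i ⊗ₖ A) := by
  ext ⟨i, j, s, a⟩ ⟨i', j', s', a'⟩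
  have hN : ∀ x y : Σ i : Fin ℓ, Fin (m i) × Fin (f i),
      N (e.symm x) (e.symm y) = (Matrix.blockDiagonal' fun i =>
        (1 : Matrix (Fin (m i)) (Fin (m i)) ℂ) ⊗ₖ C i) x y := by
    intro x y
    rw [← h]
    simp
  have hL : (Matrix.reindex (bigE e α) (bigE e α) (N ⊗ₖ A))
        ⟨i, j, s, a⟩ ⟨i', j', s', a'⟩
      = N (e.symm ⟨i, (j, s)⟩) (e.symm ⟨i', (j', s')⟩) * A a a' := by
    simp [Matrix.reindex_apply, Matrix.submatrix_apply, bigE_symm_apply,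
      Matrix.kroneckerMap_apply]
  rw [hL, hN ⟨i, (j, s)⟩ ⟨i', (j', s')⟩]
  by_cases hii : i = i'
  · subst hii
    rw [Matrix.blockDiagonal'_apply_eq, Matrix.blockDiagonal'_apply_eq]
    simp only [Matrix.kroneckerMap_apply]
    ring
  · rw [Matrix.blockDiagonal'_apply_ne _ _ _ hii,
      Matrix.blockDiagonal'_apply_ne _ _ _ hii, zero_mul]

lemma volt_sum {n : ℕ} [Fintype α] (G : SimpleGraph α) (φ : α → α → Equiv.Perm (Fin n))
    (Γ : Subgroup (Equiv.Perm (Fin n))) (hφΓ : ∀ u₁ u₂, G.Adj u₁ u₂ → φ u₁ u₂ ∈ Γ) :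
    ∑ γ : Γ, voltM G φ (γ : Equiv.Perm (Fin n)) = adjM G := by
  ext u v
  rw [Matrix.sum_apply]
  by_cases h : G.Adj u v
  · rw [Finset.sum_eq_single (⟨φ u v, hφΓ u v h⟩ : Γ)]
    · simp [voltM, adjM, h]
    · intro b _ hb
      simp only [voltM, Matrix.of_apply, ite_eq_right_iff, and_imp]
      intro _ hc
      exact absurd (Subtype.ext hc.symm) hb
    · intro hmem
      exact absurd (Finset.mem_univ _) hmem
  · simp [voltM, adjM, h]

lemma adj_bundle_eq {n : ℕ} [Fintype α] (G : SimpleGraph α) (φ : α → α → Equiv.Perm (Fin n))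
    (hsym : ∀ u₁ u₂, G.Adj u₁ u₂ → φ u₂ u₁ = (φ u₁ u₂)⁻¹)
    (Γ : Subgroup (Equiv.Perm (Fin n))) (hφΓ : ∀ u₁ u₂, G.Adj u₁ u₂ → φ u₁ u₂ ∈ Γ) :
    adjM (bundle G (⊥ : SimpleGraph (Fin n)) φ hsym)
      = ∑ γ : Γ, permM (γ : Equiv.Perm (Fin n)) ⊗ₖ voltM G φ (γ : Equiv.Perm (Fin n)) := by
  ext ⟨k, u⟩ ⟨l, v⟩
  rw [Matrix.sum_apply]
  by_cases h : G.Adj u v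
  · rw [Finset.sum_eq_single (⟨φ u v, hφΓ u v h⟩ : Γ)]
    · by_cases hl : l = φ u v k
      · subst hl
        simp [adjM, bundle, permM, voltM, h, Matrix.kroneckerMap_apply]
      · have : ¬ (bundle G (⊥ : SimpleGraph (Fin n)) φ hsym).Adj (k, u) (l, v) := by
          simp only [bundle, SimpleGraph.bot_adj]
          tauto
        simp only [adjM, Matrix.of_apply, if_neg this, Matrix.kroneckerMap_apply, permM, voltM]
        rw [if_neg (fun hc => hl hc.symm), zero_mul]
    · intro b _ hb
      simp only [Matrix.kroneckerMap_apply, voltM, Matrix.of_apply, mul_ite, mul_one, mul_zero,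
        ite_eq_right_iff, and_imp]
      intro _ hc
      exact absurd (Subtype.ext hc.symm) hb
    · intro hmem
      exact absurd (Finset.mem_univ _) hmem
  · have : ¬ (bundle G (⊥ : SimpleGraph (Fin n)) φ hsym).Adj (k, u) (l, v) := by
      simp only [bundle, SimpleGraph.bot_adj]
      tauto
    simp [adjM, this, Matrix.kroneckerMap_apply, voltM, h]

lemma deg_bundle_eq {n : ℕ} [Fintype α] (G : SimpleGraph α) (φ : α → α → Equiv.Perm (Fin n))
    (hsym : ∀ u₁ u₂, G.Adj u₁ u₂ → φ u₂ u₁ = (φ u₁ u₂)⁻¹) :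
    degM (bundle G (⊥ : SimpleGraph (Fin n)) φ hsym)
      = (1 : Matrix (Fin n) (Fin n) ℂ) ⊗ₖ degM G := by
  have hdeg : ∀ (k : Fin n) (u : α),
      ((bundle G (⊥ : SimpleGraph (Fin n)) φ hsym).neighborSet (k, u)).ncard
        = (G.neighborSet u).ncard := by
    intro k u
    have himg : (bundle G (⊥ : SimpleGraph (Fin n)) φ hsym).neighborSet (k, u)
        = (fun v => (φ u v k, v)) '' G.neighborSet u := by
      ext ⟨l, v⟩
      simp only [SimpleGraph.mem_neighborSet, Set.mem_image, bundle, SimpleGraph.bot_adj]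
      constructor
      · rintro (⟨hadj, rfl⟩ | ⟨_, hF⟩)
        · exact ⟨v, hadj, rfl⟩
        · exact absurd hF (by simp)
      · rintro ⟨w, hadj, hw⟩
        obtain ⟨h1, h2⟩ := Prod.mk.injEq .. ▸ hw
        subst h2
        exact Or.inl ⟨hadj, h1.symm⟩
    rw [himg, Set.ncard_image_of_injective _ (fun a b hab => congrArg Prod.snd hab)]
  ext ⟨k, u⟩ ⟨l, v⟩
  by_cases hkl : (k, u) = (l, v)
  · obtain ⟨h1, h2⟩ := Prod.mk.injEq .. ▸ hkl
    subst h1; subst h2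
    simp [degM, Matrix.kroneckerMap_apply, Matrix.one_apply, hdeg]
  · have : ¬(k = l ∧ u = v) := fun ⟨h1, h2⟩ => hkl (by rw [h1, h2])
    have hz : degM (bundle G (⊥ : SimpleGraph (Fin n)) φ hsym) (k, u) (l, v) = 0 := by
      simp only [degM, Matrix.diagonal, Matrix.of_apply]
      exact if_neg hkl
    rw [hz]
    rcases not_and_or.mp this with h | h
    · simp [Matrix.kroneckerMap_apply, Matrix.one_apply_ne h]
    · simp [degM, Matrix.kroneckerMap_apply, Matrix.diagonal_apply_ne _ h]

lemma reindex_sub {p q : Type*} (e : p ≃ q) (X Y : Matrix p p ℂ) :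
    Matrix.reindex e e (X - Y) = Matrix.reindex e e X - Matrix.reindex e e Y := by
  ext x y; simp

lemma reindex_sum {p q ι : Type*} (e : p ≃ q) (s : Finset ι) (F : ι → Matrix p p ℂ) :
    Matrix.reindex e e (∑ γ ∈ s, F γ) = ∑ γ ∈ s, Matrix.reindex e e (F γ) := by
  ext x y; simp [Matrix.sum_apply]

lemma blockDiagonal'_sub' {ο : Type*} [DecidableEq ο] {σ : ο → Type*}
    (P Q : ∀ i, Matrix (σ i) (σ i) ℂ) :
    Matrix.blockDiagonal' (fun i => P i - Q i) = Matrix.blockDiagonal' P - Matrix.blockDiagonal' Q :=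
  Matrix.blockDiagonal'_sub P Q

lemma blockDiagonal'_sum' {ο ι : Type*} [DecidableEq ο] {σ : ο → Type*}
    (s : Finset ι) (F : ι → ∀ i, Matrix (σ i) (σ i) ℂ) :
    Matrix.blockDiagonal' (fun i => ∑ γ ∈ s, F γ i)
      = ∑ γ ∈ s, Matrix.blockDiagonal' (F γ) := by
  ext ⟨i, x⟩ ⟨j, y⟩
  rw [Matrix.sum_apply]
  by_cases h : i = j
  · subst h
    simp [Matrix.blockDiagonal'_apply_eq, Matrix.sum_apply]
  · simp [Matrix.blockDiagonal'_apply_ne _ _ _ h, Matrix.sum_apply]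

set_option maxHeartbeats 2000000 in
theorem genCharPoly_of_covering
    {α : Type*} [Fintype α] (G : SimpleGraph α) (n : ℕ)
    (φ : α → α → Equiv.Perm (Fin n))
    (hsym : ∀ u₁ u₂, G.Adj u₁ u₂ → φ u₂ u₁ = (φ u₁ u₂)⁻¹)
    (Γ : Subgroup (Equiv.Perm (Fin n)))
    (hφΓ : ∀ u₁ u₂, G.Adj u₁ u₂ → φ u₁ u₂ ∈ Γ)
    (ℓ : ℕ) (hℓ : 0 < ℓ)
    (f m : Fin ℓ → ℕ) (ρ : ∀ i : Fin ℓ, Γ →* GL (Fin (f i)) ℂ)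
    (hf1 : f ⟨0, hℓ⟩ = 1) (hm1 : m ⟨0, hℓ⟩ = 1)
    (hρ1 : ∀ γ : Γ, (ρ ⟨0, hℓ⟩ γ
        : Matrix (Fin (f ⟨0, hℓ⟩)) (Fin (f ⟨0, hℓ⟩)) ℂ) = 1)
    (hsum : ∑ i, m i * f i = n)
    (e : Fin n ≃ Σ i : Fin ℓ, Fin (m i) × Fin (f i))
    (M : Matrix (Fin n) (Fin n) ℂ) (hM : IsUnit M.det)
    (hP : ∀ γ : Γ, Matrix.reindex e e (M⁻¹ * permM (γ : Equiv.Perm (Fin n)) * M)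
        = Matrix.blockDiagonal' fun i =>
            (1 : Matrix (Fin (m i)) (Fin (m i)) ℂ)
              ⊗ₖ (ρ i γ : Matrix (Fin (f i)) (Fin (f i)) ℂ))
    (lam μ : ℂ) :
    Fpoly (bundle G (⊥ : SimpleGraph (Fin n)) φ hsym) lam μ
      = Fpoly G lam μ *
          ∏ i ∈ Finset.univ.erase ⟨0, hℓ⟩,
            (Matrix.det
              ((1 : Matrix (Fin (f i)) (Fin (f i)) ℂ)
                  ⊗ₖ (lam • (1 : Matrix α α ℂ) + μ • degM G)
                - ∑ γ : Γ, (ρ i γ : Matrix (Fin (f i)) (Fin (f i)) ℂ)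
                    ⊗ₖ voltM G φ (γ : Equiv.Perm (Fin n)))) ^ (m i) := by
  have hvolt := volt_sum G φ Γ hφΓ
  have hMM : M⁻¹ * M = 1 := Matrix.nonsing_inv_mul M hM
  have hX : lam • (1 : Matrix (Fin n × α) (Fin n × α) ℂ)
      - (adjM (bundle G (⊥ : SimpleGraph (Fin n)) φ hsym)
        - μ • degM (bundle G (⊥ : SimpleGraph (Fin n)) φ hsym))
      = (1 : Matrix (Fin n) (Fin n) ℂ) ⊗ₖ (lam • (1 : Matrix α α ℂ) + μ • degM G)
        - ∑ γ : Γ, permM (γ : Equiv.Perm (Fin n)) ⊗ₖ voltM G φ (γ : Equiv.Perm (Fin n)) := by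
    rw [adj_bundle_eq G φ hsym Γ hφΓ, deg_bundle_eq G φ hsym,
      Matrix.kronecker_add, Matrix.kronecker_smul, Matrix.kronecker_smul,
      Matrix.one_kronecker_one]
    abel
  have hdetconj : ∀ X : Matrix (Fin n × α) (Fin n × α) ℂ,
      ((M⁻¹ ⊗ₖ (1 : Matrix α α ℂ)) * X * (M ⊗ₖ (1 : Matrix α α ℂ))).det = X.det := by
    intro X
    have h1 : (M⁻¹ ⊗ₖ (1 : Matrix α α ℂ)).det * (M ⊗ₖ (1 : Matrix α α ℂ)).det = 1 := by
      rw [← Matrix.det_mul, ← Matrix.mul_kronecker_mul, hMM, Matrix.one_mul,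
        Matrix.one_kronecker_one, Matrix.det_one]
    rw [Matrix.det_mul, Matrix.det_mul, mul_comm ((M⁻¹ ⊗ₖ (1 : Matrix α α ℂ)).det) X.det,
      mul_assoc, h1, mul_one]
  have hC : (M⁻¹ ⊗ₖ (1 : Matrix α α ℂ))
        * ((1 : Matrix (Fin n) (Fin n) ℂ) ⊗ₖ (lam • (1 : Matrix α α ℂ) + μ • degM G)
            - ∑ γ : Γ, permM (γ : Equiv.Perm (Fin n)) ⊗ₖ voltM G φ (γ : Equiv.Perm (Fin n)))
        * (M ⊗ₖ (1 : Matrix α α ℂ))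
      = (1 : Matrix (Fin n) (Fin n) ℂ) ⊗ₖ (lam • (1 : Matrix α α ℂ) + μ • degM G)
        - ∑ γ : Γ, (M⁻¹ * permM (γ : Equiv.Perm (Fin n)) * M)
            ⊗ₖ voltM G φ (γ : Equiv.Perm (Fin n)) := by
    rw [Matrix.mul_sub, Matrix.sub_mul, Matrix.mul_sum, Matrix.sum_mul]
    congr 1
    · rw [← Matrix.mul_kronecker_mul, ← Matrix.mul_kronecker_mul]
      rw [Matrix.mul_one, hMM, Matrix.one_mul, Matrix.mul_one]
    · refine Finset.sum_congr rfl fun γ _ => ?_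
      rw [← Matrix.mul_kronecker_mul, ← Matrix.mul_kronecker_mul]
      rw [Matrix.one_mul, Matrix.mul_one]
  have hre : Matrix.reindex (bigE e α) (bigE e α)
      ((1 : Matrix (Fin n) (Fin n) ℂ) ⊗ₖ (lam • (1 : Matrix α α ℂ) + μ • degM G)
        - ∑ γ : Γ, (M⁻¹ * permM (γ : Equiv.Perm (Fin n)) * M)
            ⊗ₖ voltM G φ (γ : Equiv.Perm (Fin n)))
      = Matrix.blockDiagonal' fun i =>
          (1 : Matrix (Fin (m i)) (Fin (m i)) ℂ) ⊗ₖ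
            ((1 : Matrix (Fin (f i)) (Fin (f i)) ℂ) ⊗ₖ (lam • (1 : Matrix α α ℂ) + μ • degM G)
              - ∑ γ : Γ, (ρ i γ : Matrix (Fin (f i)) (Fin (f i)) ℂ)
                  ⊗ₖ voltM G φ (γ : Equiv.Perm (Fin n))) := by
    have h1 : Matrix.reindex (bigE e α) (bigE e α)
        ((1 : Matrix (Fin n) (Fin n) ℂ) ⊗ₖ (lam • (1 : Matrix α α ℂ) + μ • degM G))
        = Matrix.blockDiagonal' fun i => (1 : Matrix (Fin (m i)) (Fin (m i)) ℂ) ⊗ₖ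
            ((1 : Matrix (Fin (f i)) (Fin (f i)) ℂ) ⊗ₖ (lam • (1 : Matrix α α ℂ) + μ • degM G)) := by
      refine reindex_kron_block e 1 (fun i => 1) _ ?_
      rw [Matrix.reindex_apply, Matrix.submatrix_one_equiv]
      have : (fun i => (1 : Matrix (Fin (m i)) (Fin (m i)) ℂ)
          ⊗ₖ (1 : Matrix (Fin (f i)) (Fin (f i)) ℂ))
          = fun i => (1 : Matrix (Fin (m i) × Fin (f i)) (Fin (m i) × Fin (f i)) ℂ) :=
        funext fun i => Matrix.one_kronecker_one
      rw [this]
      exact Matrix.blockDiagonal'_one.symm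
    have h2 : ∀ γ : Γ, Matrix.reindex (bigE e α) (bigE e α)
        ((M⁻¹ * permM (γ : Equiv.Perm (Fin n)) * M) ⊗ₖ voltM G φ (γ : Equiv.Perm (Fin n)))
        = Matrix.blockDiagonal' fun i => (1 : Matrix (Fin (m i)) (Fin (m i)) ℂ) ⊗ₖ
            ((ρ i γ : Matrix (Fin (f i)) (Fin (f i)) ℂ)
              ⊗ₖ voltM G φ (γ : Equiv.Perm (Fin n))) :=
      fun γ => reindex_kron_block e _ _ _ (hP γ)
    have hinner : (fun i =>
        (1 : Matrix (Fin (m i)) (Fin (m i)) ℂ) ⊗ₖ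
          ((1 : Matrix (Fin (f i)) (Fin (f i)) ℂ) ⊗ₖ (lam • (1 : Matrix α α ℂ) + μ • degM G)
            - ∑ γ : Γ, (ρ i γ : Matrix (Fin (f i)) (Fin (f i)) ℂ)
                ⊗ₖ voltM G φ (γ : Equiv.Perm (Fin n))))
        = fun i =>
          ((1 : Matrix (Fin (m i)) (Fin (m i)) ℂ) ⊗ₖ
            ((1 : Matrix (Fin (f i)) (Fin (f i)) ℂ) ⊗ₖ (lam • (1 : Matrix α α ℂ) + μ • degM G)))
          - ∑ γ : Γ, (1 : Matrix (Fin (m i)) (Fin (m i)) ℂ) ⊗ₖ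
              ((ρ i γ : Matrix (Fin (f i)) (Fin (f i)) ℂ)
                ⊗ₖ voltM G φ (γ : Equiv.Perm (Fin n))) :=
      funext fun i => by rw [kron_sub, kron_sum]
    rw [hinner, blockDiagonal'_sub', blockDiagonal'_sum', reindex_sub, reindex_sum, h1]
    congr 1
    exact Finset.sum_congr rfl fun γ _ => h2 γ
  have main : (lam • (1 : Matrix (Fin n × α) (Fin n × α) ℂ)
      - (adjM (bundle G (⊥ : SimpleGraph (Fin n)) φ hsym)
        - μ • degM (bundle G (⊥ : SimpleGraph (Fin n)) φ hsym))).det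
      = Fpoly G lam μ *
          ∏ i ∈ Finset.univ.erase ⟨0, hℓ⟩,
            (Matrix.det
              ((1 : Matrix (Fin (f i)) (Fin (f i)) ℂ)
                  ⊗ₖ (lam • (1 : Matrix α α ℂ) + μ • degM G)
                - ∑ γ : Γ, (ρ i γ : Matrix (Fin (f i)) (Fin (f i)) ℂ)
                    ⊗ₖ voltM G φ (γ : Equiv.Perm (Fin n)))) ^ (m i) := ?_
  · rw [Fpoly]
    convert main using 4
    ext i j
    by_cases h : i = j <;> simp [Matrix.one_apply, h]
  rw [hX,
    ← hdetconj ((1 : Matrix (Fin n) (Fin n) ℂ) ⊗ₖ (lam • (1 : Matrix α α ℂ) + μ • degM G)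
        - ∑ γ : Γ, permM (γ : Equiv.Perm (Fin n)) ⊗ₖ voltM G φ (γ : Equiv.Perm (Fin n))),
    hC,
    ← Matrix.det_reindex_self (bigE e α)
      ((1 : Matrix (Fin n) (Fin n) ℂ) ⊗ₖ (lam • (1 : Matrix α α ℂ) + μ • degM G)
        - ∑ γ : Γ, (M⁻¹ * permM (γ : Equiv.Perm (Fin n)) * M)
            ⊗ₖ voltM G φ (γ : Equiv.Perm (Fin n))),
    hre]
  refine (det_blockDiagonal'_eq _).trans ?_
  have hdk : ∀ i : Fin ℓ,
      ((1 : Matrix (Fin (m i)) (Fin (m i)) ℂ) ⊗ₖ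
        ((1 : Matrix (Fin (f i)) (Fin (f i)) ℂ) ⊗ₖ (lam • (1 : Matrix α α ℂ) + μ • degM G)
          - ∑ γ : Γ, (ρ i γ : Matrix (Fin (f i)) (Fin (f i)) ℂ)
              ⊗ₖ voltM G φ (γ : Equiv.Perm (Fin n)))).det
      = ((1 : Matrix (Fin (f i)) (Fin (f i)) ℂ) ⊗ₖ (lam • (1 : Matrix α α ℂ) + μ • degM G)
          - ∑ γ : Γ, (ρ i γ : Matrix (Fin (f i)) (Fin (f i)) ℂ)
              ⊗ₖ voltM G φ (γ : Equiv.Perm (Fin n))).det ^ m i := by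
    intro i
    rw [Matrix.det_kronecker, Matrix.det_one, one_pow, one_mul, Fintype.card_fin]
  rw [Finset.prod_congr rfl fun i _ => hdk i,
    ← Finset.mul_prod_erase Finset.univ _ (Finset.mem_univ (⟨0, hℓ⟩ : Fin ℓ))]
  congr 1
  have h0 : ((1 : Matrix (Fin (f ⟨0, hℓ⟩)) (Fin (f ⟨0, hℓ⟩)) ℂ)
        ⊗ₖ (lam • (1 : Matrix α α ℂ) + μ • degM G)
      - ∑ γ : Γ, (ρ ⟨0, hℓ⟩ γ : Matrix (Fin (f ⟨0, hℓ⟩)) (Fin (f ⟨0, hℓ⟩)) ℂ)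
          ⊗ₖ voltM G φ (γ : Equiv.Perm (Fin n)))
      = (1 : Matrix (Fin (f ⟨0, hℓ⟩)) (Fin (f ⟨0, hℓ⟩)) ℂ)
          ⊗ₖ (lam • (1 : Matrix α α ℂ) + μ • degM G - adjM G) := by
    rw [kron_sub]
    congr 1
    rw [← hvolt, kron_sum]
    exact Finset.sum_congr rfl fun γ _ => by rw [hρ1 γ]
  rw [hm1, pow_one, h0, Matrix.det_kronecker, Matrix.det_one, one_pow, one_mul,
    Fintype.card_fin, hf1, pow_one, Fpoly]
  congr 1
  abel



end
end

section
/- Let G be a finite simple graph and F a finite simple graph that is regular of degree r. Let φ be a voltage assignment on G whose values lie in an abelian subgroup Γ of Aut(F), and suppose M is an invertible complex V(F)×V(F) matrix such that M⁻¹P(γ)M is diagonal for every γ ∈ Γ, with diagonal entries λ_{(γ,1)}, …, λ_{(γ,ν_F)} (ν_F = |V(F)|), and M⁻¹A(F)M is diagonal with diagonal entries λ_{(F,1)}, …, λ_{(F,ν_F)}. For each i, let A_i denote the V(G)×V(G) complex matrix whose (u₁,u₂)-entry is λ_{(φ(u₁,u₂),i)} if u₁ and u₂ are adjacent in G and 0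 otherwise. Then for all complex λ, μ: F_{G×^φF}(λ,μ) = ∏_{i=1}^{ν_F} det( (λ + rμ − λ_{(F,i)})·I_{V(G)} − (A_i − μ·D(G)) ). -/
open Matrix BigOperators Kronecker
open scoped Classical

noncomputable section

variable {α β : Type*}

lemma bundle_adj' (G : SimpleGraph α) (F : SimpleGraph β) (φ : α → α → Equiv.Perm β)
    (hsym : ∀ u₁ u₂, G.Adj u₁ u₂ → φ u₂ u₁ = (φ u₁ u₂)⁻¹) (p q : β × α) :
    (bundle G F φ hsym).Adj p q ↔
      (G.Adj p.2 q.2 ∧ q.1 = φ p.2 q.2 p.1) ∨ (p.2 = q.2 ∧ F.Adj p.1 q.1) := Iff.rfl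

lemma bundle_deg [Fintype α] [Fintype β] (G : SimpleGraph α) (F : SimpleGraph β)
    (φ : α → α → Equiv.Perm β)
    (hsym : ∀ u₁ u₂, G.Adj u₁ u₂ → φ u₂ u₁ = (φ u₁ u₂)⁻¹) (v : β) (u : α) :
    ((bundle G F φ hsym).neighborSet (v, u)).ncard
      = (G.neighborSet u).ncard + (F.neighborSet v).ncard := by
  have hset : (bundle G F φ hsym).neighborSet (v, u)
      = (fun u' => (φ u u' v, u')) '' (G.neighborSet u)
        ∪ (fun w => (w, u)) '' (F.neighborSet v) := by
    ext ⟨w, u'⟩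
    simp only [SimpleGraph.mem_neighborSet, bundle_adj', Set.mem_union, Set.mem_image]
    constructor
    · rintro (⟨h1, h2⟩ | ⟨h1, h2⟩)
      · exact Or.inl ⟨u', h1, by simp [h2]⟩
      · exact Or.inr ⟨w, h2, by rw [h1]⟩
    · rintro (⟨a, ha, heq⟩ | ⟨b, hb, heq⟩)
      · cases heq; exact Or.inl ⟨ha, rfl⟩
      · cases heq; exact Or.inr ⟨rfl, hb⟩
  have hinj1 : Function.Injective (fun u' : α => ((φ u u' v, u') : β × α)) := by
    intro a b h; exact congrArg Prod.snd h
  have hinj2 : Function.Injective (fun w : β => ((w, u) : β × α)) := by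
    intro a b h; exact congrArg Prod.fst h
  have hdisj : Disjoint ((fun u' => (φ u u' v, u')) '' (G.neighborSet u))
      ((fun w => (w, u)) '' (F.neighborSet v)) := by
    rw [Set.disjoint_left]
    rintro ⟨w, u'⟩ ⟨a, ha, heq⟩ ⟨b, hb, heq'⟩
    cases heq
    have h2 := congrArg Prod.snd heq'
    simp only at h2
    exact G.ne_of_adj ha h2
  rw [hset, Set.ncard_union_eq hdisj, Set.ncard_image_of_injective _ hinj1,
    Set.ncard_image_of_injective _ hinj2]

set_option maxHeartbeats 1000000 in
theorem genCharPoly_of_abelian_bundle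
    {α β : Type*} [Fintype α] [Fintype β]
    (G : SimpleGraph α) (F : SimpleGraph β)
    (r : ℕ) (hreg : ∀ v, (F.neighborSet v).ncard = r)
    (φ : α → α → Equiv.Perm β)
    (hsym : ∀ u₁ u₂, G.Adj u₁ u₂ → φ u₂ u₁ = (φ u₁ u₂)⁻¹)
    (Γ : Subgroup (Equiv.Perm β)) (hΓAut : Γ ≤ autPerm F)
    (hΓab : ∀ γ δ : Γ, γ * δ = δ * γ)
    (hφΓ : ∀ u₁ u₂, G.Adj u₁ u₂ → φ u₁ u₂ ∈ Γ)
    (M : Matrix β β ℂ) (hM : IsUnit M.det)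
    (d : Equiv.Perm β → β → ℂ)
    (hPd : ∀ γ ∈ Γ, M⁻¹ * permM γ * M = Matrix.diagonal (d γ))
    (dF : β → ℂ)
    (hAd : M⁻¹ * adjM F * M = Matrix.diagonal dF)
    (lam μ : ℂ) :
    Fpoly (bundle G F φ hsym) lam μ
      = ∏ v : β,
          Matrix.det
            ((lam + (r : ℂ) * μ - dF v) • (1 : Matrix α α ℂ)
              - ((Matrix.of fun u₁ u₂ => if G.Adj u₁ u₂ then d (φ u₁ u₂) v else 0)
                  - μ • degM G)) := by
  classical
  set C : Matrix (β × α) (β × α) ℂ := M ⊗ₖ (1 : Matrix α α ℂ) with hC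
  set B : β → Matrix α α ℂ := fun v =>
    (lam + (r : ℂ) * μ - dF v) • (1 : Matrix α α ℂ)
      - ((Matrix.of fun u₁ u₂ => if G.Adj u₁ u₂ then d (φ u₁ u₂) v else 0)
          - μ • degM G) with hB
  have hMM : M * M⁻¹ = 1 := Matrix.mul_nonsing_inv _ hM
  have hPM : ∀ γ ∈ Γ, permM γ * M = M * Matrix.diagonal (d γ) := by
    intro γ hγ
    have h := congrArg (fun X => M * X) (hPd γ hγ)
    simpa [← mul_assoc, hMM] using h
  have hAM : adjM F * M = M * Matrix.diagonal dF := by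
    have h := congrArg (fun X => M * X) hAd
    simpa [← mul_assoc, hMM] using h
  have hMe : ∀ u₁ u₂, G.Adj u₁ u₂ → ∀ v₁ v₂ : β,
      M (φ u₁ u₂ v₁) v₂ = M v₁ v₂ * d (φ u₁ u₂) v₂ := by
    intro u₁ u₂ hadj v₁ v₂
    have h := congrFun (congrFun (hPM _ (hφΓ u₁ u₂ hadj)) v₁) v₂
    simpa [Matrix.mul_apply, permM, ite_mul, Matrix.diagonal_apply, mul_ite, mul_zero] using h
  have hAe : ∀ v₁ v₂ : β,
      (∑ w, (if F.Adj v₁ w then (1 : ℂ) else 0) * M w v₂) = M v₁ v₂ * dF v₂ := by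
    intro v₁ v₂
    have h := congrFun (congrFun hAM v₁) v₂
    simpa [Matrix.mul_apply, adjM, Matrix.diagonal_apply, mul_ite, mul_zero] using h
  have hdegB : degM (bundle G F φ hsym)
      = Matrix.diagonal (fun p : β × α => ((G.neighborSet p.2).ncard + (r : ℂ))) := by
    ext ⟨v, u⟩ q
    simp only [degM, Matrix.diagonal_apply]
    split_ifs with hh
    · subst hh
      rw [bundle_deg, hreg]
      push_cast
      ring
    · rfl
  have hAe' : ∀ v₁ v₂ : β,
      (∑ w, (if F.Adj v₁ w then M w v₂ else 0)) = M v₁ v₂ * dF v₂ := by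
    intro v₁ v₂
    simpa [ite_mul] using hAe v₁ v₂
  have hR : ∀ (v₁ v₂ : β) (u₁ u₂ : α),
      (C * dsum B) (v₁, u₁) (v₂, u₂) = M v₁ v₂ * B v₂ u₁ u₂ := by
    intro v₁ v₂ u₁ u₂
    rw [Matrix.mul_apply, Fintype.sum_prod_type, Finset.sum_comm]
    simp [hC, dsum, Matrix.kroneckerMap_apply, Matrix.one_apply, mul_ite, ite_mul,
      mul_zero, zero_mul, mul_one, one_mul, Finset.sum_ite_eq, Finset.sum_ite_eq']
  have hkey : (lam • (1 : Matrix (β × α) (β × α) ℂ)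
        - (adjM (bundle G F φ hsym) - μ • degM (bundle G F φ hsym))) * C = C * dsum B := by
    ext ⟨v₁, u₁⟩ ⟨v₂, u₂⟩
    rw [hR v₁ v₂ u₁ u₂, Matrix.mul_apply, Fintype.sum_prod_type, hdegB]
    by_cases h : u₁ = u₂
    · subst h
      have hGA : ¬ G.Adj u₁ u₁ := G.irrefl
      simp only [hC, Matrix.kroneckerMap_apply, Matrix.one_apply,
        Matrix.sub_apply, Matrix.smul_apply, Matrix.diagonal_apply, adjM, bundle_adj',
        Matrix.of_apply, smul_eq_mul, Prod.mk.injEq, hGA, false_and, false_or,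
        if_false, true_and, and_true, mul_ite, ite_mul, mul_zero, zero_mul, mul_one, one_mul,
        Finset.sum_ite_eq, Finset.sum_ite_eq', Finset.mem_univ, if_true]
      rw [hB]
      simp only [Matrix.sub_apply, Matrix.smul_apply, Matrix.one_apply_eq, Matrix.of_apply,
        degM, Matrix.diagonal_apply_eq, smul_eq_mul, hGA, if_false]
      simp only [sub_mul, ite_mul, zero_mul, one_mul, Finset.sum_sub_distrib,
        Finset.sum_ite_eq, Finset.mem_univ, if_true, hAe']
      ring
    · have h2 : u₂ ≠ u₁ := Ne.symm h
      simp only [hC, Matrix.kroneckerMap_apply, Matrix.one_apply,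
        Matrix.sub_apply, Matrix.smul_apply, Matrix.diagonal_apply, adjM, bundle_adj',
        Matrix.of_apply, smul_eq_mul, Prod.mk.injEq, h, h2, and_false, false_and, or_false,
        if_false, mul_ite, ite_mul, mul_zero, zero_mul, mul_one, one_mul,
        Finset.sum_ite_eq, Finset.sum_ite_eq', Finset.mem_univ, if_true]
      rw [hB]
      simp only [Matrix.sub_apply, Matrix.smul_apply, Matrix.one_apply, Matrix.of_apply,
        degM, Matrix.diagonal_apply, h, if_false, smul_eq_mul]
      by_cases hadj : G.Adj u₁ u₂
      · simp only [hadj, if_true, true_and, ite_mul, one_mul, zero_mul, zero_sub, sub_zero]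
        rw [Finset.sum_congr rfl (fun x _ => neg_mul _ (M x v₂)) ]
        rw [Finset.sum_neg_distrib]
        simp only [ite_mul, one_mul, zero_mul, Finset.sum_ite_eq', Finset.mem_univ, if_true]
        rw [hMe u₁ u₂ hadj]
        ring
      · simp [hadj]
  have hdetC : C.det ≠ 0 := by
    have h : C.det = M.det ^ (Fintype.card α) * (1 : Matrix α α ℂ).det ^ (Fintype.card β) :=
      Matrix.det_kronecker M 1
    have hM0 : M.det ≠ 0 := by simpa [isUnit_iff_ne_zero] using hM
    simp [h, pow_ne_zero, hM0]
  have h1 : Fpoly (bundle G F φ hsym) lam μ = (dsum B).det := by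
    have hdet : (lam • (1 : Matrix (β × α) (β × α) ℂ)
        - (adjM (bundle G F φ hsym) - μ • degM (bundle G F φ hsym))).det * C.det
          = (dsum B).det * C.det := by
      calc (lam • (1 : Matrix (β × α) (β × α) ℂ)
          - (adjM (bundle G F φ hsym) - μ • degM (bundle G F φ hsym))).det * C.det
          = ((lam • (1 : Matrix (β × α) (β × α) ℂ)
            - (adjM (bundle G F φ hsym) - μ • degM (bundle G F φ hsym))) * C).det :=
            (Matrix.det_mul _ _).symm
        _ = (C * dsum B).det := by rw [hkey]
        _ = (dsum B).det * C.det := by rw [Matrix.det_mul]; ring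
    have h2 : (lam • (1 : Matrix (β × α) (β × α) ℂ)
        - (adjM (bundle G F φ hsym) - μ • degM (bundle G F φ hsym))).det = (dsum B).det :=
      mul_right_cancel₀ hdetC hdet
    unfold Fpoly
    rw [← h2]
    congr 1
    ext i j
    by_cases hij : i = j <;>
      simp [Matrix.sub_apply, Matrix.smul_apply, Matrix.one_apply, hij]
  rw [h1]
  have hre : dsum B
      = (Matrix.reindex (Equiv.prodComm α β) (Equiv.prodComm α β) (Matrix.blockDiagonal B) :
          Matrix (β × α) (β × α) ℂ) := by
    ext ⟨v, u⟩ ⟨w, u'⟩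
    simp [dsum, Matrix.blockDiagonal_apply, Equiv.prodComm]
  rw [hre, Matrix.det_reindex_self, Matrix.det_blockDiagonal]


end
end

section
/- Let 𝒜 be a finite abelian group of order n, and let S ⊆ 𝒜 satisfy S = S⁻¹ and identity ∉ S. Let G be a finite simple graph and φ a voltage assignment on G with values in 𝒜 (i.e., φ(u₂,u₁) = φ(u₁,u₂)⁻¹ for adjacent pairs), and let G×^φCay(𝒜,S) be the graph on V(G)×𝒜 in which (u₁,a) and (u₂,b) are adjacent iff either u₁ and u₂ are adjacent in G and b = φ(u₁,u₂)·a, or u₁ = u₂ and a⁻¹b ∈ S. Let χ₁, χ₂, …, χ_n be an enumeration of all group homomorphisms 𝒜 → ℂˣ with χ₁ the trivial one, and for each i let A_{χᵢ} be the V(G)×V(G) matrix whose (u₁,u₂)-entry is χᵢ(φ(u₁,u₂)) if u₁ and u₂ are adjacent in G and 0 otherwise. Then for all complex λ, μ: F_{G×^φCay(𝒜,S)}(λ,μ) = F_G(λ + |S|(μ−1), μ) · ∏_{i=2}^{n} det( (λ + |S|μ − χᵢ(S))·I_{V(G)} − (A_{χᵢ} − μ·D(G)) ), where χᵢ(S)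 = Σ_{s∈S} χᵢ(s). -/
open Matrix BigOperators Kronecker
open scoped Classical

noncomputable section

variable {α β : Type*}

def cayBundle {α A : Type*} [CommGroup A] (G : SimpleGraph α) (S : Finset A)
    (hS : ∀ s ∈ S, s⁻¹ ∈ S) (hid : (1 : A) ∉ S)
    (φ : α → α → A) (hsym : ∀ u₁ u₂, G.Adj u₁ u₂ → φ u₂ u₁ = (φ u₁ u₂)⁻¹) :
    SimpleGraph (α × A) where
  Adj p q := (G.Adj p.1 q.1 ∧ q.2 = φ p.1 q.1 * p.2) ∨ (p.1 = q.1 ∧ p.2⁻¹ * q.2 ∈ S)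
  symm := by
    constructor
    rintro ⟨u₁, a⟩ ⟨u₂, b⟩ hadj
    dsimp only at hadj ⊢
    rcases hadj with ⟨h, rfl⟩ | ⟨rfl, h⟩
    · left
      refine ⟨h.symm, ?_⟩
      rw [hsym _ _ h]
      exact (inv_mul_cancel_left _ _).symm
    · right
      refine ⟨rfl, ?_⟩
      simpa [_root_.mul_inv_rev] using hS _ h
  loopless := by
    constructor
    rintro ⟨u, a⟩ hadj
    dsimp only at hadj
    rcases hadj with ⟨h, _⟩ | ⟨_, h⟩
    · exact G.irrefl h
    · exact hid (by simpa using h)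

def charM {α A : Type*} [Fintype α] [CommGroup A] (G : SimpleGraph α)
    (φ : α → α → A) (χ : A →* ℂˣ) : Matrix α α ℂ :=
  Matrix.of fun u₁ u₂ => if G.Adj u₁ u₂ then (χ (φ u₁ u₂) : ℂ) else 0

lemma Fpoly_eq {α : Type*} [Fintype α] (G : SimpleGraph α) (lam mu : ℂ) :
    Fpoly G lam mu = (lam • (1 : Matrix α α ℂ) - (adjM G - mu • degM G)).det := rfl

lemma char_sum_eq_zero {A : Type*} [CommGroup A] [Fintype A] (ψ : A →* ℂˣ) (hψ : ψ ≠ 1) :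
    ∑ a : A, ((ψ a : ℂˣ) : ℂ) = 0 := by
  obtain ⟨b, hb⟩ : ∃ b, ψ b ≠ 1 := by
    by_contra h
    push_neg at h
    exact hψ (MonoidHom.ext fun a => h a)
  have h1 : ∑ a : A, ((ψ (b * a) : ℂˣ) : ℂ) = ∑ a : A, ((ψ a : ℂˣ) : ℂ) :=
    Fintype.sum_equiv (Equiv.mulLeft b) _ _ fun a => rfl
  have h2 : ((ψ b : ℂˣ) : ℂ) * ∑ a : A, ((ψ a : ℂˣ) : ℂ) = ∑ a : A, ((ψ a : ℂˣ) : ℂ) := by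
    rw [Finset.mul_sum, ← h1]
    exact Finset.sum_congr rfl fun a _ => by rw [_root_.map_mul, Units.val_mul]
  have h3 : (((ψ b : ℂˣ) : ℂ) - 1) * ∑ a : A, ((ψ a : ℂˣ) : ℂ) = 0 := by
    rw [sub_mul, one_mul, h2, sub_self]
  have hb' : ((ψ b : ℂˣ) : ℂ) - 1 ≠ 0 := fun h => hb (Units.ext (by simpa using sub_eq_zero.mp h))
  exact (mul_eq_zero.mp h3).resolve_left hb'

lemma cayBundle_degree {α A : Type*} [Fintype α] [CommGroup A] [Fintype A]
    (S : Finset A) (hS : ∀ s ∈ S, s⁻¹ ∈ S) (hid : (1 : A) ∉ S)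
    (G : SimpleGraph α) (φ : α → α → A)
    (hsym : ∀ u₁ u₂, G.Adj u₁ u₂ → φ u₂ u₁ = (φ u₁ u₂)⁻¹) (u : α) (a : A) :
    ((cayBundle G S hS hid φ hsym).neighborSet (u, a)).ncard
      = (G.neighborSet u).ncard + S.card := by
  have hset : (cayBundle G S hS hid φ hsym).neighborSet (u, a)
      = (fun v => (v, φ u v * a)) '' (G.neighborSet u) ∪ (fun s => (u, a * s)) '' (S : Set A) := by
    ext ⟨v, b⟩
    simp only [SimpleGraph.mem_neighborSet, cayBundle, Set.mem_union, Set.mem_image,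
      Finset.mem_coe, Prod.mk.injEq]
    constructor
    · rintro (⟨h1, rfl⟩ | ⟨rfl, h2⟩)
      · exact Or.inl ⟨v, h1, rfl, rfl⟩
      · exact Or.inr ⟨a⁻¹ * b, h2, rfl, by group⟩
    · rintro (⟨w, hw, rfl, rfl⟩ | ⟨s, hs, rfl, rfl⟩)
      · exact Or.inl ⟨hw, rfl⟩
      · exact Or.inr ⟨rfl, by simpa using hs⟩
  have hdisj : Disjoint ((fun v => (v, φ u v * a)) '' (G.neighborSet u))
      ((fun s => (u, a * s)) '' (S : Set A)) := by
    rw [Set.disjoint_left]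
    rintro ⟨v, b⟩ ⟨w, hw, heq⟩ ⟨s, hs, heq2⟩
    have h1 : w = v := congrArg Prod.fst heq
    have h2 : u = v := congrArg Prod.fst heq2
    exact G.ne_of_adj hw (h2.trans h1.symm)
  rw [hset, Set.ncard_union_eq hdisj (Set.toFinite _) (Set.toFinite _),
    Set.ncard_image_of_injective _ (fun x y h => congrArg Prod.fst h),
    Set.ncard_image_of_injective _ (fun x y h => mul_left_cancel (congrArg Prod.snd h)),
    Set.ncard_coe_finset]

set_option maxHeartbeats 2000000 in
theorem genCharPoly_of_cayley_bundle
    {α A : Type*} [Fintype α] [CommGroup A] [Fintype A]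
    (n : ℕ) (hcard : Fintype.card A = n) (hn0 : 0 < n)
    (S : Finset A) (hS : ∀ s ∈ S, s⁻¹ ∈ S) (hid : (1 : A) ∉ S)
    (G : SimpleGraph α) (φ : α → α → A)
    (hsym : ∀ u₁ u₂, G.Adj u₁ u₂ → φ u₂ u₁ = (φ u₁ u₂)⁻¹)
    (χ : Fin n → (A →* ℂˣ)) (hχ : Function.Bijective χ)
    (hχ1 : χ ⟨0, hn0⟩ = 1)
    (lam μ : ℂ) :
    Fpoly (cayBundle G S hS hid φ hsym) lam μ
      = Fpoly G (lam + (S.card : ℂ) * (μ - 1)) μ *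
          ∏ i ∈ Finset.univ.erase ⟨0, hn0⟩,
            Matrix.det
              ((lam + (S.card : ℂ) * μ - ∑ s ∈ S, ((χ i s : ℂˣ) : ℂ))
                  • (1 : Matrix α α ℂ)
                - (charM G φ (χ i) - μ • degM G)) := by
  classical
  set i0 : Fin n := ⟨0, hn0⟩ with hi0
  set e : A ≃ Fin n := Fintype.equivFinOfCardEq hcard with he
  set Blk : Fin n → Matrix α α ℂ := fun i =>
    (lam + (S.card : ℂ) * μ - ∑ s ∈ S, ((χ i s : ℂˣ) : ℂ)) • (1 : Matrix α α ℂ)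
      - (charM G φ (χ i) - μ • degM G) with hBlk
  set W : Matrix A A ℂ := Matrix.of fun a b => ((χ (e b) a : ℂˣ) : ℂ) with hW
  set W' : Matrix A A ℂ := Matrix.of fun a b => (n : ℂ)⁻¹ * (((χ (e a))⁻¹ b : ℂˣ) : ℂ) with hW'
  set P : Matrix (α × A) (α × A) ℂ := (1 : Matrix α α ℂ) ⊗ₖ W with hP
  have hn : (n : ℂ) ≠ 0 := Nat.cast_ne_zero.mpr hn0.ne'
  have horth : ∀ a b : A, (∑ c : A, (((χ (e a))⁻¹ c : ℂˣ) : ℂ) * ((χ (e b) c : ℂˣ) : ℂ))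
      = if a = b then (n : ℂ) else 0 := by
    intro a b
    have key : ∑ c : A, ((((χ (e a))⁻¹ * χ (e b)) c : ℂˣ) : ℂ)
        = ∑ c : A, (((χ (e a))⁻¹ c : ℂˣ) : ℂ) * ((χ (e b) c : ℂˣ) : ℂ) :=
      Finset.sum_congr rfl fun c _ => by rw [MonoidHom.mul_apply, Units.val_mul]
    by_cases hab : a = b
    · subst hab
      rw [if_pos rfl, ← key]
      have hone : (χ (e a))⁻¹ * χ (e a) = 1 := by ext x; simp
      rw [hone]
      simp [Finset.card_univ, hcard]
    · rw [if_neg hab, ← key]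
      exact char_sum_eq_zero _ fun h => hab (e.injective (hχ.injective (inv_mul_eq_one.mp h)))
  have hWW : W' * W = 1 := by
    ext a b
    rw [Matrix.mul_apply, Matrix.one_apply]
    calc ∑ c : A, W' a c * W c b
        = (n : ℂ)⁻¹ * ∑ c : A, (((χ (e a))⁻¹ c : ℂˣ) : ℂ) * ((χ (e b) c : ℂˣ) : ℂ) := by
          rw [Finset.mul_sum]
          exact Finset.sum_congr rfl fun c _ => by simp [hW, hW']; ring
      _ = if a = b then 1 else 0 := by
          rw [horth]
          split
          · exact inv_mul_cancel₀ hn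
          · exact mul_zero _
  have hWW' : W * W' = 1 := mul_eq_one_comm.mp hWW
  have hPP' : P * ((1 : Matrix α α ℂ) ⊗ₖ W') = 1 := by
    rw [hP, ← Matrix.mul_kronecker_mul, hWW', Matrix.one_mul, Matrix.one_kronecker_one]
  have hPdet : P.det ≠ 0 := by
    intro h
    have h2 := congrArg Matrix.det hPP'
    rw [Matrix.det_mul, h, zero_mul, Matrix.det_one] at h2
    exact zero_ne_one h2
  have hsumS : ∀ a : A, ∀ ψ : A →* ℂˣ,
      (∑ b : A, if a⁻¹ * b ∈ S then ((ψ b : ℂˣ) : ℂ) else 0)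
        = ((ψ a : ℂˣ) : ℂ) * ∑ s ∈ S, ((ψ s : ℂˣ) : ℂ) := by
    intro a ψ
    rw [← Equiv.sum_comp (Equiv.mulLeft a)
      (fun b => if a⁻¹ * b ∈ S then ((ψ b : ℂˣ) : ℂ) else 0)]
    simp only [Equiv.coe_mulLeft, inv_mul_cancel_left]
    rw [Finset.sum_ite_mem, Finset.univ_inter, Finset.mul_sum]
    exact Finset.sum_congr rfl fun s _ => by rw [_root_.map_mul, Units.val_mul]
  have hMP : adjM (cayBundle G S hS hid φ hsym) * P
      = P * Matrix.blockDiagonal (fun b : A =>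
          charM G φ (χ (e b)) + (∑ s ∈ S, ((χ (e b) s : ℂˣ) : ℂ)) • (1 : Matrix α α ℂ)) := by
    ext ⟨u, a⟩ ⟨v, c⟩
    have hL : (adjM (cayBundle G S hS hid φ hsym) * P) (u, a) (v, c)
        = ∑ b : A, adjM (cayBundle G S hS hid φ hsym) (u, a) (v, b) * W b c := by
      rw [Matrix.mul_apply, Fintype.sum_prod_type, Finset.sum_comm]
      refine Finset.sum_congr rfl fun b _ => ?_
      simp [hP, Matrix.one_apply, ite_mul, mul_ite, Finset.sum_ite_eq']
    have hR : (P * Matrix.blockDiagonal (fun b : A =>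
          charM G φ (χ (e b)) + (∑ s ∈ S, ((χ (e b) s : ℂˣ) : ℂ)) • (1 : Matrix α α ℂ)))
          (u, a) (v, c)
        = W a c * ((charM G φ (χ (e c))) u v
            + (∑ s ∈ S, ((χ (e c) s : ℂˣ) : ℂ)) * (if u = v then 1 else 0)) := by
      rw [Matrix.mul_apply, Fintype.sum_prod_type]
      simp [hP, Matrix.one_apply, Matrix.blockDiagonal_apply, ite_mul, mul_ite,
        Finset.sum_ite_eq', Finset.sum_ite_eq, Matrix.smul_apply, Matrix.one_apply, smul_eq_mul]
    rw [hL, hR]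
    by_cases hA : G.Adj u v
    · have hne : u ≠ v := G.ne_of_adj hA
      have hLv : ∑ b : A, adjM (cayBundle G S hS hid φ hsym) (u, a) (v, b) * W b c
          = W (φ u v * a) c := by
        rw [Finset.sum_eq_single (φ u v * a)]
        · simp [adjM, cayBundle, hA, hne]
        · intro b _ hb
          simp [adjM, cayBundle, hne, fun h : b = φ u v * a => hb h]
        · simp
      rw [hLv]
      simp only [hW, Matrix.of_apply, _root_.map_mul, Units.val_mul, charM]
      rw [if_pos hA, if_neg hne, mul_zero, add_zero]
      ring
    · by_cases huv : u = v
      · subst huv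
        have hLv : ∑ b : A, adjM (cayBundle G S hS hid φ hsym) (u, a) (u, b) * W b c
            = ∑ b : A, if a⁻¹ * b ∈ S then ((χ (e c) b : ℂˣ) : ℂ) else 0 := by
          refine Finset.sum_congr rfl fun b _ => ?_
          simp [adjM, cayBundle, hA, hW, ite_mul]
        rw [hLv, hsumS]
        simp [hW, charM, hA]
        try ring
      · have hLv : ∑ b : A, adjM (cayBundle G S hS hid φ hsym) (u, a) (v, b) * W b c = 0 := by
          refine Finset.sum_eq_zero fun b _ => ?_
          simp [adjM, cayBundle, hA, huv]
        rw [hLv]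
        simp [charM, hA, huv]
  have hDP : degM (cayBundle G S hS hid φ hsym) * P
      = P * Matrix.blockDiagonal (fun _ : A => degM G + (S.card : ℂ) • (1 : Matrix α α ℂ)) := by
    ext ⟨u, a⟩ ⟨v, c⟩
    have hL : (degM (cayBundle G S hS hid φ hsym) * P) (u, a) (v, c)
        = (((G.neighborSet u).ncard : ℂ) + (S.card : ℂ)) * ((if u = v then 1 else 0) * W a c) := by
      rw [Matrix.mul_apply]
      rw [Finset.sum_eq_single (u, a) (fun p _ hp => by
        simp [degM, Matrix.diagonal_apply, hp.symm]) (by simp)]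
      simp only [degM, Matrix.diagonal_apply_eq]
      rw [cayBundle_degree S hS hid G φ hsym u a]
      push_cast
      simp [degM, hP, Matrix.one_apply]
    have hR : (P * Matrix.blockDiagonal (fun _ : A => degM G + (S.card : ℂ) • (1 : Matrix α α ℂ)))
          (u, a) (v, c)
        = W a c * ((if u = v then ((G.neighborSet u).ncard : ℂ) else 0)
            + (S.card : ℂ) * (if u = v then 1 else 0)) := by
      rw [Matrix.mul_apply, Fintype.sum_prod_type]
      simp [hP, Matrix.one_apply, Matrix.blockDiagonal_apply, ite_mul, mul_ite,
        Finset.sum_ite_eq', Finset.sum_ite_eq, degM, Matrix.diagonal_apply, smul_eq_mul]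
    rw [hL, hR]
    by_cases huv : u = v
    · subst huv; simp; ring
    · simp [huv]
  have hXP : (lam • (1 : Matrix (α × A) (α × A) ℂ)
        - (adjM (cayBundle G S hS hid φ hsym) - μ • degM (cayBundle G S hS hid φ hsym))) * P
      = P * Matrix.blockDiagonal (fun b : A => Blk (e b)) := by
    have hsmul : lam • P = P * (lam • (1 : Matrix (α × A) (α × A) ℂ)) := by
      rw [Matrix.mul_smul, Matrix.mul_one]
    rw [Matrix.sub_mul, Matrix.sub_mul, Matrix.smul_mul, Matrix.one_mul, Matrix.smul_mul,
      hMP, hDP, hsmul, ← Matrix.mul_smul, ← Matrix.mul_sub, ← Matrix.mul_sub]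
    congr 1
    ext ⟨w, b⟩ ⟨x, d⟩
    simp only [Matrix.sub_apply, Matrix.smul_apply, Matrix.one_apply, Matrix.blockDiagonal_apply,
      hBlk, Matrix.add_apply, smul_eq_mul, Prod.mk.injEq]
    by_cases hbd : b = d
    · subst hbd
      by_cases hwx : w = x <;>
        simp [hwx, degM, Matrix.diagonal_apply, Matrix.sub_apply, Matrix.smul_apply,
          Matrix.one_apply, Matrix.add_apply] <;> ring
    · simp [hbd]
  have hdet1 : Fpoly (cayBundle G S hS hid φ hsym) lam μ = ∏ b : A, (Blk (e b)).det := by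
    have h := congrArg Matrix.det hXP
    rw [Matrix.det_mul, Matrix.det_mul, mul_comm P.det] at h
    have h2 := mul_right_cancel₀ hPdet h
    have h4 : Fpoly (cayBundle G S hS hid φ hsym) lam μ
        = (lam • (1 : Matrix (α × A) (α × A) ℂ)
          - (adjM (cayBundle G S hS hid φ hsym) - μ • degM (cayBundle G S hS hid φ hsym))).det := by
      unfold Fpoly
      congr 1
      ext p q
      simp [Matrix.one_apply, Matrix.sub_apply, Matrix.smul_apply]
    rw [h4, h2, Matrix.det_blockDiagonal]
  rw [hdet1,
    Fintype.prod_equiv e (fun b => (Blk (e b)).det) (fun i => (Blk i).det) (fun b => rfl),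
    ← Finset.mul_prod_erase Finset.univ _ (Finset.mem_univ i0)]
  congr 1
  · have hB0 : Blk i0 = (lam + (S.card : ℂ) * (μ - 1)) • (1 : Matrix α α ℂ)
        - (adjM G - μ • degM G) := by
      rw [hBlk]
      dsimp only
      rw [hχ1]
      have h1 : charM G φ (1 : A →* ℂˣ) = adjM G := by
        ext u v; simp [charM, adjM]
      have h2 : ∑ s ∈ S, (((1 : A →* ℂˣ) s : ℂˣ) : ℂ) = (S.card : ℂ) := by simp
      rw [h1, h2]
      have h3 : lam + (S.card : ℂ) * μ - (S.card : ℂ) = lam + (S.card : ℂ) * (μ - 1) := by ring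
      rw [h3]
    rw [Fpoly_eq, hB0]
end
end

section
/- For all natural numbers s, t ≥ 1 and all complex λ, μ, the generalized characteristic polynomial of the complete bipartite graph K_{s,t} satisfies F_{K_{s,t}}(λ,μ) = (λ + tμ)^{s−1} (λ + sμ)^{t−1} [ (λ + sμ)(λ + tμ) − st ]. -/
open Matrix BigOperators Kronecker
open scoped Classical

noncomputable section

variable {α β : Type*}

lemma ncard_left (s t : ℕ) (i : Fin s) :
    ((completeBipartiteGraph (Fin s) (Fin t)).neighborSet (Sum.inl i)).ncard = t := by
  have h : (completeBipartiteGraph (Fin s) (Fin t)).neighborSet (Sum.inl i)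
      = Set.range Sum.inr := by
    ext w; cases w <;> simp [SimpleGraph.neighborSet]
  rw [h, ← Nat.card_coe_set_eq, Nat.card_range_of_injective Sum.inr_injective]
  simp

lemma ncard_right (s t : ℕ) (j : Fin t) :
    ((completeBipartiteGraph (Fin s) (Fin t)).neighborSet (Sum.inr j)).ncard = s := by
  have h : (completeBipartiteGraph (Fin s) (Fin t)).neighborSet (Sum.inr j)
      = Set.range Sum.inl := by
    ext w; cases w <;> simp [SimpleGraph.neighborSet]
  rw [h, ← Nat.card_coe_set_eq, Nat.card_range_of_injective Sum.inl_injective]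
  simp

lemma matform (s t : ℕ) (lam μ : ℂ) :
    Fpoly (completeBipartiteGraph (Fin s) (Fin t)) lam μ
      = (Matrix.fromBlocks ((lam + t * μ) • 1) (-Matrix.of fun _ _ => 1)
          (-Matrix.of fun _ _ => 1) ((lam + s * μ) • 1)
          : Matrix (Fin s ⊕ Fin t) (Fin s ⊕ Fin t) ℂ).det := by
  unfold Fpoly
  congr 1
  ext u v
  rcases u with i | i <;> rcases v with j | j <;>
    simp [adjM, degM, Matrix.one_apply, Matrix.diagonal, ncard_left, ncard_right,
      Sum.inl_injective.eq_iff, Sum.inr_injective.eq_iff]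
  · rcases eq_or_ne i j with rfl | h
    · simp; ring
    · simp [h]
  · rcases eq_or_ne i j with rfl | h
    · simp; ring
    · simp [h]


lemma detblock (s t : ℕ) (hs : 1 ≤ s) (ht : 1 ≤ t) (a b : ℂ) (ha : a ≠ 0) (hb : b ≠ 0) :
    (Matrix.fromBlocks (a • (1 : Matrix (Fin s) (Fin s) ℂ))
        (-Matrix.of fun _ _ => (1 : ℂ)) (-Matrix.of fun _ _ => (1 : ℂ))
        (b • (1 : Matrix (Fin t) (Fin t) ℂ))).det
      = a ^ (s - 1) * b ^ (t - 1) * (a * b - s * t) := by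
  have hright : (a • (1 : Matrix (Fin s) (Fin s) ℂ)) * (a⁻¹ • 1) = 1 := by
    simp [smul_smul, mul_inv_cancel₀ ha, inv_mul_cancel₀ ha]
  haveI : Invertible (a • (1 : Matrix (Fin s) (Fin s) ℂ)) :=
    invertibleOfRightInverse _ _ hright
  rw [Matrix.det_fromBlocks₁₁, invOf_eq_right_inv hright]
  have hCB : ((-Matrix.of fun _ _ => (1 : ℂ)) : Matrix (Fin t) (Fin s) ℂ)
      * ((a⁻¹ • 1) : Matrix (Fin s) (Fin s) ℂ)
      * ((-Matrix.of fun _ _ => (1 : ℂ)) : Matrix (Fin s) (Fin t) ℂ)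
      = (a⁻¹ * s) • (Matrix.of fun _ _ => (1 : ℂ) : Matrix (Fin t) (Fin t) ℂ) := by
    ext i j
    simp [Matrix.mul_apply, Finset.mul_sum, mul_comm]
  rw [hCB]
  set c : ℂ := a⁻¹ * s with hc
  have key : (b • (1 : Matrix (Fin t) (Fin t) ℂ))
        - c • (Matrix.of fun _ _ => (1 : ℂ))
      = b • (1 + Matrix.replicateCol (Fin 1) (fun _ : Fin t => -(c / b))
          * Matrix.replicateRow (Fin 1) (fun _ : Fin t => (1 : ℂ))) := by
    ext i j
    rcases eq_or_ne i j with rfl | h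
    · simp [Matrix.mul_apply, Matrix.one_apply_eq]
      field_simp
      ring
    · simp [Matrix.mul_apply, Matrix.one_apply_ne h]
      field_simp
  rw [key, Matrix.det_smul, Matrix.det_smul, show Matrix.det (1 + Matrix.replicateCol (Fin 1) (fun _ : Fin t => -(c / b))
      * Matrix.replicateRow (Fin 1) (fun _ : Fin t => (1 : ℂ)) : Matrix (Fin t) (Fin t) ℂ)
      = 1 + (fun _ : Fin t => (1:ℂ)) ⬝ᵥ (fun _ : Fin t => -(c / b)) by
    convert Matrix.det_one_add_replicateCol_mul_replicateRow (ι := Fin 1) _ _ <;> rfl]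
  have hdots : ((fun _ : Fin t => (1:ℂ)) ⬝ᵥ fun _ : Fin t => -(c / b)) = (t : ℂ) * (-(c / b)) := by
    simp [dotProduct, Finset.sum_const, mul_comm]
  rw [hdots, Matrix.det_one]
  have has : a ^ s = a ^ (s - 1) * a := by
    rw [← pow_succ, Nat.sub_add_cancel hs]
  have hbt : b ^ t = b ^ (t - 1) * b := by
    rw [← pow_succ, Nat.sub_add_cancel ht]
  simp only [Fintype.card_fin, Matrix.det_one, has, hbt, hc, mul_one]
  field_simp
  ring


theorem genCharPoly_of_completeBipartite
    (s t : ℕ) (hs : 1 ≤ s) (ht : 1 ≤ t) (lam μ : ℂ) :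
    Fpoly (completeBipartiteGraph (Fin s) (Fin t)) lam μ
      = (lam + (t : ℂ) * μ) ^ (s - 1) * (lam + (s : ℂ) * μ) ^ (t - 1) *
          ((lam + (s : ℂ) * μ) * (lam + (t : ℂ) * μ) - (s : ℂ) * (t : ℂ)) := by
  set g : ℂ → ℂ := fun l =>
    (l + (t : ℂ) * μ) ^ (s - 1) * (l + (s : ℂ) * μ) ^ (t - 1) *
      ((l + (s : ℂ) * μ) * (l + (t : ℂ) * μ) - (s : ℂ) * (t : ℂ)) with hg
  set f : ℂ → ℂ := fun l => Fpoly (completeBipartiteGraph (Fin s) (Fin t)) l μ with hf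
  have main : ∀ l : ℂ, l ≠ -((t : ℂ) * μ) → l ≠ -((s : ℂ) * μ) → f l = g l := by
    intro l h1 h2
    have ha : l + (t : ℂ) * μ ≠ 0 := fun h => h1 (by linear_combination h)
    have hb : l + (s : ℂ) * μ ≠ 0 := fun h => h2 (by linear_combination h)
    show Fpoly _ l μ = _
    rw [matform s t l μ, detblock s t hs ht _ _ ha hb]
    ring
  have hfd : f = fun l : ℂ =>
      (Matrix.fromBlocks ((l + t * μ) • 1) (-Matrix.of fun _ _ => 1)
        (-Matrix.of fun _ _ => 1) ((l + s * μ) • 1)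
        : Matrix (Fin s ⊕ Fin t) (Fin s ⊕ Fin t) ℂ).det :=
    funext fun l => matform s t l μ
  have cf : Continuous f := by
    rw [hfd]
    apply Continuous.matrix_det
    apply Continuous.matrix_fromBlocks
    · exact ((continuous_id.add continuous_const).smul continuous_const)
    · exact continuous_const
    · exact continuous_const
    · exact ((continuous_id.add continuous_const).smul continuous_const)
  have cg : Continuous g := by unfold g; fun_prop
  have hd : Dense ({-((t : ℂ) * μ), -((s : ℂ) * μ)} : Set ℂ)ᶜ :=
    Set.Countable.dense_compl ℂ
      ((Set.finite_singleton _).insert _).countable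
  have heq : f = g := by
    apply cf.ext_on hd cg
    intro l hl
    simp only [Set.mem_compl_iff, Set.mem_insert_iff, Set.mem_singleton_iff, not_or] at hl
    exact main l hl.1 hl.2
  exact congrFun heq lam

end
end

section
/- For all natural numbers m, n ≥ 1 and all complex λ, μ, the generalized characteristic polynomial of the Cartesian (box) product K_{1,m}□K_n of the star K_{1,m} and the complete graph K_n satisfies F_{K_{1,m}□K_n}(λ,μ) = [λ + nμ − (n−1)]^{m−1} · { [λ + nμ − (n−1)][λ + (m+n−1)μ − (n−1)] − m } · [λ + nμ + 1]^{(m−1)(n−1)} · { [λ + nμ + 1][λ + (m+n−1)μ + 1] − m }^{n−1}. -/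
open Matrix BigOperators Kronecker
open scoped Classical

noncomputable section

variable {α β : Type*}

namespace StarAux

def N (m : ℕ) (a b : ℂ) : Matrix (Fin 1 ⊕ Fin m) (Fin 1 ⊕ Fin m) ℂ :=
  Matrix.fromBlocks (Matrix.of fun _ _ => a) (Matrix.of fun _ _ => -1)
    (Matrix.of fun _ _ => -1) (b • 1)

lemma det_N (m : ℕ) (hm : 1 ≤ m) (a b : ℂ) :
    (N m a b).det = b ^ (m - 1) * (a * b - m) := by
  by_cases hb : b = 0
  · subst hb
    obtain ⟨m', rfl⟩ : ∃ m', m = m' + 1 := ⟨m - 1, (Nat.succ_pred_eq_of_pos hm).symm⟩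
    rcases m' with _ | m''
    · rw [← Matrix.det_submatrix_equiv_self
        ((finSumFinEquiv (m := 1) (n := 1)).symm : Fin 2 ≃ Fin 1 ⊕ Fin 1) (N 1 a 0),
        Matrix.det_fin_two]
      have h0 : ((finSumFinEquiv (m := 1) (n := 1)).symm : Fin 2 ≃ Fin 1 ⊕ Fin 1) 0
          = Sum.inl 0 := by decide
      have h1 : ((finSumFinEquiv (m := 1) (n := 1)).symm : Fin 2 ≃ Fin 1 ⊕ Fin 1) 1
          = Sum.inr 0 := by decide
      simp [Matrix.submatrix_apply, h0, h1, N, Matrix.fromBlocks]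
    · have : (N (m'' + 2) a 0).det = 0 := by
        apply Matrix.det_zero_of_row_eq (i := Sum.inr 0) (j := Sum.inr 1) (by simp)
        funext w
        cases w <;> simp [N, Matrix.fromBlocks, Matrix.one_apply]
      rw [this, zero_pow (by omega)]
      ring
  · haveI : Invertible (b • (1 : Matrix (Fin m) (Fin m) ℂ)) :=
      ⟨b⁻¹ • 1, by rw [Matrix.smul_mul, Matrix.one_mul, smul_smul, inv_mul_cancel₀ hb, one_smul],
        by rw [Matrix.smul_mul, Matrix.one_mul, smul_smul, mul_inv_cancel₀ hb, one_smul]⟩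
    rw [N, Matrix.det_fromBlocks₂₂ (Matrix.of fun (_ : Fin 1) (_ : Fin 1) => a)
      (Matrix.of fun (_ : Fin 1) (_ : Fin m) => (-1 : ℂ))
      (Matrix.of fun (_ : Fin m) (_ : Fin 1) => (-1 : ℂ)) (b • 1)]
    have hinv : (⅟(b • (1 : Matrix (Fin m) (Fin m) ℂ))) = b⁻¹ • 1 :=
      invOf_eq_right_inv (by
        rw [Matrix.smul_mul, Matrix.one_mul, smul_smul, mul_inv_cancel₀ hb, one_smul])
    rw [hinv]
    have hdet : (b • (1 : Matrix (Fin m) (Fin m) ℂ)).det = b ^ m := by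
      rw [Matrix.det_smul, Matrix.det_one, Fintype.card_fin, mul_one]
    rw [hdet]
    have hsc : ((Matrix.of fun (_ : Fin 1) (_ : Fin 1) => a) -
        (Matrix.of fun (_ : Fin 1) (_ : Fin m) => (-1:ℂ)) *
        (b⁻¹ • (1 : Matrix (Fin m) (Fin m) ℂ)) *
        (Matrix.of fun (_ : Fin m) (_ : Fin 1) => (-1:ℂ))).det = a - m * b⁻¹ := by
      rw [Matrix.det_unique]
      simp [Matrix.mul_apply, Matrix.one_apply, Finset.sum_ite_eq, mul_comm]
    rw [hsc]
    obtain ⟨m', rfl⟩ : ∃ m', m = m' + 1 := ⟨m - 1, (Nat.succ_pred_eq_of_pos hm).symm⟩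
    simp only [Nat.add_sub_cancel]
    field_simp
    ring

lemma N_sub_smul (m : ℕ) (a b d : ℂ) :
    N m a b - d • 1 = N m (a - d) (b - d) := by
  ext u v
  rcases u with x | i <;> rcases v with y | j
  · have : x = y := Subsingleton.elim x y
    subst this
    simp [N, Matrix.fromBlocks, Matrix.one_apply]
  · simp [N, Matrix.fromBlocks, Matrix.one_apply]
  · simp [N, Matrix.fromBlocks, Matrix.one_apply]
  · by_cases hij : i = j <;> simp [N, Matrix.fromBlocks, Matrix.one_apply, hij]

def Pm (n : ℕ) [NeZero n] : Matrix (Fin n) (Fin n) ℂ :=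
  Matrix.of fun k j => if j = 0 then 1 else (if k = j then 1 else 0) - (if k = 0 then 1 else 0)

def Qm (n : ℕ) [NeZero n] : Matrix (Fin n) (Fin n) ℂ :=
  Matrix.of fun i k => if i = 0 then ((n:ℂ))⁻¹ else (if i = k then 1 else 0) - ((n:ℂ))⁻¹

def Jm (n : ℕ) : Matrix (Fin n) (Fin n) ℂ := Matrix.of fun _ _ => 1

lemma sumQ (n : ℕ) [NeZero n] (i : Fin n) :
    ∑ k, Qm n i k = if i = 0 then 1 else 0 := by
  have hn : ((n:ℂ)) ≠ 0 := Nat.cast_ne_zero.mpr (NeZero.ne n)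
  by_cases hi : i = 0 <;>
    simp [Qm, hi, Finset.sum_sub_distrib, Finset.sum_ite_eq, Finset.card_univ, hn,
      mul_inv_cancel₀, nsmul_eq_mul]

lemma QP (n : ℕ) [NeZero n] : Qm n * Pm n = 1 := by
  have hn : ((n:ℂ)) ≠ 0 := Nat.cast_ne_zero.mpr (NeZero.ne n)
  ext i j
  rw [Matrix.mul_apply]
  by_cases hj : j = 0
  · subst hj
    have hP : ∀ x : Fin n, Pm n x 0 = 1 := fun x => by simp [Pm]
    simp only [hP, mul_one]
    rw [sumQ n i]
    simp [Matrix.one_apply, eq_comm]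
  · have step : ∀ k, Qm n i k * Pm n k j =
        (Qm n i k * (if k = j then 1 else 0)) - Qm n i k * (if k = 0 then 1 else 0) := by
      intro k; simp [Pm, hj, mul_sub]
    rw [Finset.sum_congr rfl fun k _ => step k, Finset.sum_sub_distrib]
    simp only [mul_ite, mul_one, mul_zero]
    rw [Finset.sum_ite_eq' Finset.univ j (Qm n i), Finset.sum_ite_eq' Finset.univ 0 (Qm n i)]
    by_cases hi : i = 0
    · simp [Qm, hi, Matrix.one_apply, Ne.symm hj]
    · by_cases hij : i = j <;> simp [Qm, hi, hj, hij, Matrix.one_apply]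

lemma QJP (n : ℕ) [NeZero n] :
    Qm n * Jm n * Pm n = Matrix.diagonal (fun j => if j = 0 then (n:ℂ) else 0) := by
  have hn : ((n:ℂ)) ≠ 0 := Nat.cast_ne_zero.mpr (NeZero.ne n)
  have hJP : Jm n * Pm n = Matrix.of fun (k : Fin n) j => if j = 0 then (n:ℂ) else 0 := by
    ext k j
    rw [Matrix.mul_apply]
    by_cases hj : j = 0 <;>
      simp [Jm, Pm, hj, Finset.sum_sub_distrib, Finset.sum_ite_eq, Finset.card_univ]
  rw [Matrix.mul_assoc, hJP]
  ext i j
  rw [Matrix.mul_apply]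
  by_cases hj : j = 0
  · subst hj
    simp only [Matrix.of_apply, if_pos rfl]
    rw [← Finset.sum_mul, sumQ n i]
    by_cases hi : i = 0 <;> simp [Matrix.diagonal_apply, hi, eq_comm]
  · by_cases hij : i = j
    · subst hij; simp [Matrix.diagonal_apply, hj]
    · simp [Matrix.diagonal_apply, hij, hj]

lemma ncard_neighborSet {V : Type*} [Fintype V] (G : SimpleGraph V) (v : V) :
    (G.neighborSet v).ncard = G.degree v := by
  rw [← Nat.card_coe_set_eq, Nat.card_eq_fintype_card,
    SimpleGraph.card_neighborSet_eq_degree]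

lemma star_deg (m : ℕ) (u : Fin 1 ⊕ Fin m) :
    (completeBipartiteGraph (Fin 1) (Fin m)).degree u
      = Sum.elim (fun _ => m) (fun _ => 1) u := by
  rw [← ncard_neighborSet]
  rcases u with x | k
  · have : (completeBipartiteGraph (Fin 1) (Fin m)).neighborSet (Sum.inl x)
        = Set.range Sum.inr := by
      ext w; cases w <;> simp
    rw [this, ← Nat.card_coe_set_eq, Nat.card_range_of_injective Sum.inr_injective,
      Nat.card_eq_fintype_card, Fintype.card_fin, Sum.elim_inl]
  · have : (completeBipartiteGraph (Fin 1) (Fin m)).neighborSet (Sum.inr k)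
        = Set.range Sum.inl := by
      ext w; cases w <;> simp
    rw [this, ← Nat.card_coe_set_eq, Nat.card_range_of_injective Sum.inl_injective,
      Nat.card_eq_fintype_card, Fintype.card_fin, Sum.elim_inr]

lemma box_deg (m n : ℕ) (hn : 1 ≤ n) (u : Fin 1 ⊕ Fin m) (i : Fin n) :
    ((((completeBipartiteGraph (Fin 1) (Fin m)).boxProd
        (⊤ : SimpleGraph (Fin n))).neighborSet (u, i)).ncard : ℂ)
      = Sum.elim (fun _ => (m:ℂ)) (fun _ => 1) u + (n:ℂ) - 1 := by
  rw [ncard_neighborSet, SimpleGraph.degree_boxProd]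
  simp only [SimpleGraph.complete_graph_degree, Fintype.card_fin, star_deg]
  rcases u with x | k <;>
    · simp only [Sum.elim_inl, Sum.elim_inr]
      push_cast [Nat.cast_sub hn]
      ring

lemma Fpoly_eq (m n : ℕ) (hn : 1 ≤ n) (lam μ : ℂ) :
    Fpoly ((completeBipartiteGraph (Fin 1) (Fin m)).boxProd (⊤ : SimpleGraph (Fin n))) lam μ
      = ((N m (lam + ((m:ℂ)+(n:ℂ)-1)*μ + 1) (lam + (n:ℂ)*μ + 1)) ⊗ₖ
            (1 : Matrix (Fin n) (Fin n) ℂ)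
          - (1 : Matrix (Fin 1 ⊕ Fin m) (Fin 1 ⊕ Fin m) ℂ) ⊗ₖ Jm n).det := by
  rw [Fpoly]
  congr 1
  ext ⟨u, i⟩ ⟨v, j⟩
  have hd := box_deg m n hn
  rcases u with x | k <;> rcases v with y | l
  · obtain rfl : x = y := Subsingleton.elim x y
    by_cases hij : i = j <;>
      simp [adjM, degM, N, Jm, Matrix.fromBlocks, Matrix.one_apply, Matrix.diagonal_apply,
        SimpleGraph.boxProd_adj, hij, hd, Matrix.kroneckerMap_apply, Matrix.sub_apply,
        Matrix.smul_apply, Prod.ext_iff] <;> ring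
  · by_cases hij : i = j <;>
      simp [adjM, degM, N, Jm, Matrix.fromBlocks, Matrix.one_apply, Matrix.diagonal_apply,
        SimpleGraph.boxProd_adj, hij, hd, Matrix.kroneckerMap_apply, Matrix.sub_apply,
        Matrix.smul_apply, Prod.ext_iff] <;> ring
  · by_cases hij : i = j <;>
      simp [adjM, degM, N, Jm, Matrix.fromBlocks, Matrix.one_apply, Matrix.diagonal_apply,
        SimpleGraph.boxProd_adj, hij, hd, Matrix.kroneckerMap_apply, Matrix.sub_apply,
        Matrix.smul_apply, Prod.ext_iff] <;> ring
  · by_cases hkl : k = l <;> by_cases hij : i = j <;>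
      simp [adjM, degM, N, Jm, Matrix.fromBlocks, Matrix.one_apply, Matrix.diagonal_apply,
        SimpleGraph.boxProd_adj, hij, hkl, hd, Matrix.kroneckerMap_apply, Matrix.sub_apply,
        Matrix.smul_apply, Prod.ext_iff] <;> ring

lemma det_main (m n : ℕ) [NeZero n] (K : Matrix (Fin 1 ⊕ Fin m) (Fin 1 ⊕ Fin m) ℂ) :
    (K ⊗ₖ (1 : Matrix (Fin n) (Fin n) ℂ)
        - (1 : Matrix (Fin 1 ⊕ Fin m) (Fin 1 ⊕ Fin m) ℂ) ⊗ₖ Jm n).det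
      = ∏ j : Fin n, (K - (if j = 0 then (n:ℂ) else 0) • 1).det := by
  set d : Fin n → ℂ := fun j => if j = 0 then (n:ℂ) else 0 with hdd
  set S1 : Matrix (Fin 1 ⊕ Fin m) (Fin 1 ⊕ Fin m) ℂ := 1 with hS1
  have hQP : (S1 ⊗ₖ Qm n) * (S1 ⊗ₖ Pm n) = 1 := by
    rw [← Matrix.mul_kronecker_mul, hS1, Matrix.one_mul, QP, Matrix.one_kronecker_one]
  have h1 : (S1 ⊗ₖ Qm n) * (K ⊗ₖ (1 : Matrix (Fin n) (Fin n) ℂ) - S1 ⊗ₖ Jm n) *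
      (S1 ⊗ₖ Pm n) = K ⊗ₖ (1 : Matrix (Fin n) (Fin n) ℂ) - S1 ⊗ₖ Matrix.diagonal d := by
    rw [Matrix.mul_sub, Matrix.sub_mul, ← Matrix.mul_kronecker_mul, ← Matrix.mul_kronecker_mul,
      ← Matrix.mul_kronecker_mul, ← Matrix.mul_kronecker_mul]
    rw [hS1, Matrix.one_mul, Matrix.mul_one, Matrix.one_mul, Matrix.one_mul, Matrix.mul_one,
      QP, QJP]
  have h2 : K ⊗ₖ (1 : Matrix (Fin n) (Fin n) ℂ) - S1 ⊗ₖ Matrix.diagonal d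
      = Matrix.blockDiagonal (fun j => K - d j • 1) := by
    ext ⟨u, i⟩ ⟨v, j⟩
    by_cases hij : i = j <;> by_cases huv : u = v <;>
      simp [Matrix.blockDiagonal_apply, Matrix.diagonal_apply, Matrix.one_apply, hij, huv,
        Matrix.kroneckerMap_apply, Matrix.sub_apply, Matrix.smul_apply, hS1]
  have hdet : (K ⊗ₖ (1 : Matrix (Fin n) (Fin n) ℂ) - S1 ⊗ₖ Jm n).det
      = ((S1 ⊗ₖ Qm n) * (K ⊗ₖ (1 : Matrix (Fin n) (Fin n) ℂ) - S1 ⊗ₖ Jm n) *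
        (S1 ⊗ₖ Pm n)).det := by
    rw [Matrix.det_mul, Matrix.det_mul, mul_comm ((S1 ⊗ₖ Qm n).det), mul_assoc,
      ← Matrix.det_mul, hQP, Matrix.det_one, mul_one]
  rw [hdet, h1, h2, Matrix.det_blockDiagonal]

end StarAux


theorem genCharPoly_of_star_boxProd_completeGraph
    (m n : ℕ) (hm : 1 ≤ m) (hn : 1 ≤ n) (lam μ : ℂ) :
    Fpoly ((completeBipartiteGraph (Fin 1) (Fin m)).boxProd (⊤ : SimpleGraph (Fin n))) lam μ
      = (lam + (n : ℂ) * μ - ((n : ℂ) - 1)) ^ (m - 1) *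
          ((lam + (n : ℂ) * μ - ((n : ℂ) - 1)) *
              (lam + ((m : ℂ) + (n : ℂ) - 1) * μ - ((n : ℂ) - 1)) - (m : ℂ)) *
          (lam + (n : ℂ) * μ + 1) ^ ((m - 1) * (n - 1)) *
          ((lam + (n : ℂ) * μ + 1) *
              (lam + ((m : ℂ) + (n : ℂ) - 1) * μ + 1) - (m : ℂ)) ^ (n - 1) := by
  obtain ⟨n', rfl⟩ : ∃ n', n = n' + 1 := ⟨n - 1, (Nat.succ_pred_eq_of_pos hn).symm⟩
  haveI : NeZero (n' + 1) := ⟨Nat.succ_ne_zero n'⟩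
  rw [StarAux.Fpoly_eq m (n' + 1) hn lam μ, StarAux.det_main]
  rw [Fin.prod_univ_succ]
  simp only [if_pos rfl, if_true, eq_self_iff_true]
  have htail : ∀ i : Fin n',
      (StarAux.N m (lam + ((m:ℂ) + ((n' + 1 : ℕ):ℂ) - 1) * μ + 1)
          (lam + ((n' + 1 : ℕ):ℂ) * μ + 1)
        - (if (Fin.succ i) = 0 then (((n' + 1 : ℕ):ℂ)) else 0) • 1).det
      = (StarAux.N m (lam + ((m:ℂ) + ((n' + 1 : ℕ):ℂ) - 1) * μ + 1)
          (lam + ((n' + 1 : ℕ):ℂ) * μ + 1)).det := by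
    intro i
    rw [if_neg (Fin.succ_ne_zero i), zero_smul, sub_zero]
  rw [Finset.prod_congr rfl fun i _ => htail i, Finset.prod_const, Finset.card_univ,
    Fintype.card_fin]
  rw [StarAux.N_sub_smul, StarAux.det_N m hm, StarAux.det_N m hm]
  have e1 : lam + ((n' + 1 : ℕ):ℂ) * μ + 1 - ((n' + 1 : ℕ):ℂ)
      = lam + ((n' + 1 : ℕ):ℂ) * μ - (((n' + 1 : ℕ):ℂ) - 1) := by ring
  have e2 : lam + ((m:ℂ) + ((n' + 1 : ℕ):ℂ) - 1) * μ + 1 - ((n' + 1 : ℕ):ℂ)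
      = lam + ((m:ℂ) + ((n' + 1 : ℕ):ℂ) - 1) * μ - (((n' + 1 : ℕ):ℂ) - 1) := by ring
  rw [e1, e2, mul_pow, ← pow_mul]
  simp only [Nat.add_sub_cancel]
  ring


end
end

section
/- Let G be a finite simple graph with ν_G vertices. Then for all complex numbers u and t with t ≠ 0: t^{ν_G} · F_G( 1/t − (1−u)²·t , (1−u)·t ) = det( I − t·A(G) + (1−u)·t²·(D(G) − (1−u)·I) ). Consequently, the reciprocal of the Bartholdi zeta function Z_G(u,t)^{-1} = (1−(1−u)²t²)^{ε_G−ν_G} · det(I − t·A(G) + (1−u)t²(D(G)−(1−u)I)) equals (1−(1−u)²t²)^{ε_G−ν_G} · t^{ν_G} · F_G(1/t − (1−u)²t, (1−u)t). -/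
open Matrix BigOperators Kronecker
open scoped Classical

noncomputable section

variable {α β : Type*}

theorem bartholdi_zeta_from_genCharPoly
    {V : Type*} [Fintype V] (G : SimpleGraph V) (u t : ℂ) (ht : t ≠ 0) :
    t ^ (Fintype.card V) * Fpoly G (1 / t - (1 - u) ^ 2 * t) ((1 - u) * t)
        = ((1 : Matrix V V ℂ) - t • adjM G
            + ((1 - u) * t ^ 2) • (degM G - (1 - u) • (1 : Matrix V V ℂ))).det
      ∧ (1 - (1 - u) ^ 2 * t ^ 2) ^ ((G.edgeSet.ncard : ℤ) - (Fintype.card V : ℤ)) *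
          ((1 : Matrix V V ℂ) - t • adjM G
            + ((1 - u) * t ^ 2) • (degM G - (1 - u) • (1 : Matrix V V ℂ))).det
        = (1 - (1 - u) ^ 2 * t ^ 2) ^ ((G.edgeSet.ncard : ℤ) - (Fintype.card V : ℤ)) *
            (t ^ (Fintype.card V) * Fpoly G (1 / t - (1 - u) ^ 2 * t) ((1 - u) * t)) := by
  have h1 : t ^ (Fintype.card V) * Fpoly G (1 / t - (1 - u) ^ 2 * t) ((1 - u) * t)
      = ((1 : Matrix V V ℂ) - t • adjM G
          + ((1 - u) * t ^ 2) • (degM G - (1 - u) • (1 : Matrix V V ℂ))).det := by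
    rw [Fpoly, ← Matrix.det_smul]
    congr 1
    ext i j
    simp only [Matrix.smul_apply, Matrix.add_apply, Matrix.sub_apply, Matrix.smul_apply,
      Matrix.one_apply, smul_eq_mul]
    by_cases h : i = j
    · simp only [h, if_pos rfl]
      field_simp
      ring
    · simp only [if_neg h]
      ring
  exact ⟨h1, by rw [h1]⟩


end
end

section
/- Let G be a finite simple graph with ν_G vertices and ε_G edges. Then for all complex λ and all complex μ with μ² ≠ 1 and λ ≠ 0: F_G(λ,μ) = (λ^{ν_G} / (1−μ²)^{ε_G}) · det( I − (1−μ²)/λ · A(G) + (1 − λμ/(1−μ²)) · ((1−μ²)/λ)² · (D(G) − (1 − λμ/(1−μ²))·I) ) · (1 − (1 − λμ/(1−μ²))²·((1−μ²)/λ)²)^{ε_G−ν_G}; that is, F_G(λ,μ) = (λ^{ν_G}/(1−μ²)^{ε_G}) · Z_G(1 − λμ/(1−μ²), (1−μ²)/λ)^{-1}, where Z_G(u,t)^{-1} = (1−(1−u)²t²)^{ε_G−ν_G} · det(I − t·A(G) + (1−u)t²(D(G)−(1−u)I)). -/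
open Matrix BigOperators Kronecker
open scoped Classical

noncomputable section

variable {α β : Type*}

theorem genCharPoly_from_bartholdi_zeta
    {V : Type*} [Fintype V] (G : SimpleGraph V) (lam μ : ℂ)
    (hμ : μ ^ 2 ≠ 1) (hlam : lam ≠ 0) :
    Fpoly G lam μ
      = (lam ^ (Fintype.card V) / (1 - μ ^ 2) ^ G.edgeSet.ncard) *
          ((1 - (1 - (1 - lam * μ / (1 - μ ^ 2))) ^ 2 * ((1 - μ ^ 2) / lam) ^ 2)
              ^ ((G.edgeSet.ncard : ℤ) - (Fintype.card V : ℤ)) *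
            ((1 : Matrix V V ℂ) - ((1 - μ ^ 2) / lam) • adjM G
              + ((1 - (1 - lam * μ / (1 - μ ^ 2))) * ((1 - μ ^ 2) / lam) ^ 2) •
                  (degM G - (1 - (1 - lam * μ / (1 - μ ^ 2))) • (1 : Matrix V V ℂ))).det) := by
  have hc : (1 - μ ^ 2) ≠ 0 := sub_ne_zero.mpr (Ne.symm hμ)
  have hscal : (1 - (1 - (1 - lam * μ / (1 - μ ^ 2))) ^ 2 * ((1 - μ ^ 2) / lam) ^ 2)
      = 1 - μ ^ 2 := by
    field_simp
    ring
  have hM : ((1 : Matrix V V ℂ) - ((1 - μ ^ 2) / lam) • adjM G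
      + ((1 - (1 - lam * μ / (1 - μ ^ 2))) * ((1 - μ ^ 2) / lam) ^ 2) •
          (degM G - (1 - (1 - lam * μ / (1 - μ ^ 2))) • (1 : Matrix V V ℂ)))
      = ((1 - μ ^ 2) / lam) • (lam • (1 : Matrix V V ℂ) - (adjM G - μ • degM G)) := by
    match_scalars
    · field_simp; ring
    · field_simp
    · field_simp; ring
  rw [hscal, hM, Matrix.det_smul]
  rw [zpow_sub₀ hc, zpow_natCast, zpow_natCast]
  have hFp : Fpoly G lam μ = (lam • (1 : Matrix V V ℂ) - (adjM G - μ • degM G)).det := rfl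
  rw [hFp]
  field_simp
  rw [mul_assoc, ← mul_pow]
  congr 2
  have hl : lam * lam⁻¹ = 1 := mul_inv_cancel₀ hlam
  linear_combination (μ ^ 2 - 1) * hl


end
end
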